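/- arXiv:1703.10382 — 5 statements merged into one kernel-verified Lean document; each statement's English description precedes it below -/
import Mathlib

section
/- No nonempty object of MRel is well-pointed: for every nonempty set A there exist morphisms f, g ∈ MRel(A,A) with f ≠ g such that for every morphism h ∈ MRel(∅, A) (i.e., h a set of pairs ([],α)) one has f ∘ h = g ∘ h. -/
/-- Composition in the category MRel. -/
def MComp {A B C : Type} (g : Set (Multiset B × C)) (f : Set (Multiset A × B)) :
    Set (Multiset A × C) :=
  {p | ∃ l : List (Multiset A × B), (∀ q ∈ l, q ∈ f) ∧
        p.1 = (l.map Prod.fst).sum ∧ (↑(l.map Prod.snd), p.2) ∈ g}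

/-- No nonempty object of MRel is well-pointed: there are distinct endomorphisms `f ≠ g`
of `A` that agree after composition with every point `h : ∅ → A`
(the terminal object of MRel is the empty set). -/
theorem stmt_3 (A : Type) (hA : Nonempty A) :
    ∃ f g : Set (Multiset A × A), f ≠ g ∧
      ∀ h : Set (Multiset Empty × A), MComp f h = MComp g h := by
  obtain ⟨α⟩ := hA
  have hz : ∀ m : Multiset Empty, m = 0 := fun m =>
    Multiset.eq_zero_of_forall_notMem (fun x => x.elim)
  refine ⟨{(({α} : Multiset A), α)}, {((α ::ₘ {α} : Multiset A), α)}, ?_, ?_⟩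
  · intro e
    have h1 : (({α} : Multiset A), α) ∈ ({((α ::ₘ {α} : Multiset A), α)} : Set _) := by
      rw [← e]; exact rfl
    simp only [Set.mem_singleton_iff, Prod.mk.injEq] at h1
    have := congrArg Multiset.card h1.1
    simp at this
  · intro h
    ext p
    constructor
    · rintro ⟨l, hl, _, hp2⟩
      simp only [Set.mem_singleton_iff, Prod.mk.injEq] at hp2
      obtain ⟨hs, hα⟩ := hp2
      have hmem : α ∈ (↑(l.map Prod.snd) : Multiset A) := by
        rw [hs]; simp
      rw [Multiset.mem_coe, List.mem_map] at hmem
      obtain ⟨q, hq, hqα⟩ := hmem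
      refine ⟨[q, q], ?_, (hz _).trans (hz _).symm, ?_⟩
      · intro q' hq'; simp at hq'; exact hq' ▸ hl q hq
      · simp only [Set.mem_singleton_iff, Prod.mk.injEq]
        constructor
        · simp [hqα]; rfl
        · exact hα
    · rintro ⟨l, hl, _, hp2⟩
      simp only [Set.mem_singleton_iff, Prod.mk.injEq] at hp2
      obtain ⟨hs, hα⟩ := hp2
      have hmem : α ∈ (↑(l.map Prod.snd) : Multiset A) := by
        rw [hs]; simp
      rw [Multiset.mem_coe, List.mem_map] at hmem
      obtain ⟨q, hq, hqα⟩ := hmem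
      refine ⟨[q], ?_, (hz _).trans (hz _).symm, ?_⟩
      · intro q' hq'; simp at hq'; exact hq' ▸ hl q hq
      · simp only [Set.mem_singleton_iff, Prod.mk.injEq]
        exact ⟨by simp [hqα], hα⟩
end

section
/- Soundness of relational graph models: if M =_β N then ⟦M⟧_x̄ = ⟦N⟧_x̄ in any relational graph model D, for any list of variables x̄ containing the free variables of M and N. -/
/-- Untyped λ⊥-terms in de Bruijn notation, intrinsically scoped:
`Tm n` is the set of λ⊥-terms with free variables among `x₀,…,x_{n-1}`. -/
inductive Tm : ℕ → Type
  | var : ∀ {n : ℕ}, Fin n → Tm n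
  | lam : ∀ {n : ℕ}, Tm (n + 1) → Tm n
  | app : ∀ {n : ℕ}, Tm n → Tm n → Tm n
  | bot : ∀ {n : ℕ}, Tm n

/-- Renaming of free variables. -/
def Tm.rename : ∀ {n m : ℕ}, (Fin n → Fin m) → Tm n → Tm m
  | _, _, f, .var k => .var (f k)
  | _, m, f, .lam t =>
      .lam (t.rename fun k => Fin.cases (motive := fun _ => Fin (m + 1)) 0
        (fun j => (f j).succ) k)
  | _, _, f, .app t u => .app (t.rename f) (u.rename f)
  | _, _, _, .bot => .bot

/-- Simultaneous (capture-avoiding) substitution. -/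
def Tm.subst : ∀ {n m : ℕ}, (Fin n → Tm m) → Tm n → Tm m
  | _, _, σ, .var k => σ k
  | _, m, σ, .lam t =>
      .lam (t.subst fun k => Fin.cases (motive := fun _ => Tm (m + 1)) (.var 0)
        (fun j => (σ j).rename Fin.succ) k)
  | _, _, σ, .app t u => .app (t.subst σ) (u.subst σ)
  | _, _, _, .bot => .bot

/-- Substitution `M{N/y}` of `N` for the 0-th free variable of `M`. -/
def Tm.subst1 {n : ℕ} (M : Tm (n + 1)) (N : Tm n) : Tm n :=
  M.subst (Fin.cases (motive := fun _ => Tm n) N Tm.var)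

/-- One-step β-reduction (contextual closure of `(λx.M)N → M{N/x}`). -/
inductive Beta : ∀ {n : ℕ}, Tm n → Tm n → Prop
  | redex {n} (M : Tm (n + 1)) (N : Tm n) : Beta (.app (.lam M) N) (M.subst1 N)
  | appL {n} {M M' N : Tm n} : Beta M M' → Beta (.app M N) (.app M' N)
  | appR {n} {M N N' : Tm n} : Beta N N' → Beta (.app M N) (.app M N')
  | lam {n} {M M' : Tm (n + 1)} : Beta M M' → Beta (.lam M) (.lam M')

/-- A λ⊥-term is a λ-term when it contains no occurrence of `⊥`. -/
def BotFree : ∀ {n : ℕ}, Tm n → Prop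
  | _, .var _ => True
  | _, .lam M => BotFree M
  | _, .app M N => BotFree M ∧ BotFree N
  | _, .bot => False

/-- The environment assigning the multiset `[α]` to the variable `k` and `0` elsewhere. -/
def single {D : Type} {n : ℕ} (k : Fin n) (α : D) : Fin n → Multiset D :=
  fun j => if j = k then {α} else 0

/-- The relational interpretation `⟦M⟧_{x̄} ⊆ M_f(D)ⁿ × D` of a λ⊥-term in a relational
graph model `(D, i)`. -/
def Interp {D : Type} (i : Multiset D × D → D) :
    ∀ {n : ℕ}, Tm n → Set ((Fin n → Multiset D) × D)
  | _, .var k => {p | ∃ α, p = (single k α, α)}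
  | _, .lam M => {p | ∃ Γ a α, (Fin.cons a Γ, α) ∈ Interp i M ∧ p = (Γ, i (a, α))}
  | n, .app M N =>
      {p | ∃ (Γ₀ : Fin n → Multiset D) (l : List ((Fin n → Multiset D) × D)),
        (Γ₀, i (↑(l.map Prod.snd), p.2)) ∈ Interp i M ∧
        (∀ q ∈ l, q ∈ Interp i N) ∧ p.1 = Γ₀ + (l.map Prod.fst).sum}
  | _, .bot => ∅

/-- The non-idempotent intersection type system associated with a relational graph model
`(D, i)`: `Der i Γ M α m` states that the judgment `Γ ⊢ M : α` is derivable by a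
derivation `π` with `#app(π) = m` occurrences of the application rule. -/
inductive Der {D : Type} (i : Multiset D × D → D) :
    ∀ {n : ℕ}, (Fin n → Multiset D) → Tm n → D → ℕ → Prop
  | var {n} (k : Fin n) (α : D) : Der i (single k α) (.var k) α 0
  | lam {n} {Γ : Fin n → Multiset D} {a : Multiset D} {M : Tm (n + 1)} {α : D} {m : ℕ} :
      Der i (Fin.cons a Γ) M α m → Der i Γ (.lam M) (i (a, α)) m
  | app {n} {Γ : Fin n → Multiset D} {M N : Tm n} {α : D} {m : ℕ}
      (l : List ((Fin n → Multiset D) × D × ℕ)) :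
      Der i Γ M (i (↑(l.map fun q => q.2.1), α)) m →
      (∀ q ∈ l, Der i q.1 N q.2.1 q.2.2) →
      Der i (Γ + (l.map fun q => q.1).sum) (.app M N) α
        (m + (l.map fun q => q.2.2).sum + 1)
namespace Stmt7Aux

variable {D : Type}

/-- Lifting a renaming under a binder. -/
abbrev liftf {n m : ℕ} (f : Fin n → Fin m) : Fin (n + 1) → Fin (m + 1) :=
  fun k => Fin.cases (motive := fun _ => Fin (m + 1)) 0 (fun j => (f j).succ) k

/-- Lifting a substitution under a binder. -/
abbrev liftσ {n m : ℕ} (σ : Fin n → Tm m) : Fin (n + 1) → Tm (m + 1) :=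
  fun k => Fin.cases (motive := fun _ => Tm (m + 1)) (.var 0)
    (fun j => (σ j).rename Fin.succ) k

/-- Pushforward of a context along a renaming. -/
def push {n m : ℕ} (f : Fin n → Fin m) (Γ : Fin n → Multiset D) : Fin m → Multiset D :=
  fun j => ∑ k : Fin n, if f k = j then Γ k else 0

theorem push_zero {n m : ℕ} (f : Fin n → Fin m) : push (D := D) f 0 = 0 := by
  funext j; simp [push]

theorem push_add {n m : ℕ} (f : Fin n → Fin m) (Γ Γ' : Fin n → Multiset D) :
    push f (Γ + Γ') = push f Γ + push f Γ' := by
  funext j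
  simp only [push, Pi.add_apply]
  rw [← Finset.sum_add_distrib]
  refine Finset.sum_congr rfl fun k _ => ?_
  split <;> simp

theorem push_single {n m : ℕ} (f : Fin n → Fin m) (k : Fin n) (α : D) :
    push f (single k α) = single (f k) α := by
  funext j
  simp only [push, single]
  rw [Finset.sum_eq_single k]
  · simp [eq_comm]
  · intro b _ hb; simp [hb]
  · simp

theorem push_lift {n m : ℕ} (f : Fin n → Fin m) (a : Multiset D) (Γ : Fin n → Multiset D) :
    push (liftf f) (Fin.cons a Γ) = Fin.cons a (push f Γ) := by
  funext j
  cases j using Fin.cases with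
  | zero =>
    simp only [push, Fin.cons_zero]
    rw [Fin.sum_univ_succ]
    simp [Fin.succ_ne_zero]
  | succ j =>
    simp only [push, Fin.cons_succ]
    rw [Fin.sum_univ_succ]
    simp [Fin.succ_ne_zero, (Fin.succ_injective m).eq_iff,
      Ne.symm (Fin.succ_ne_zero j)]

theorem push_succ {n : ℕ} (Γ : Fin n → Multiset D) :
    push Fin.succ Γ = Fin.cons 0 Γ := by
  funext j
  cases j using Fin.cases with
  | zero => simp [push, Fin.succ_ne_zero]
  | succ j => simp [push, (Fin.succ_injective n).eq_iff, Finset.sum_ite_eq']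

end Stmt7Aux
namespace Stmt7Aux

theorem push_list_sum {n m : ℕ} (f : Fin n → Fin m) (l : List (Fin n → Multiset D)) :
    push f l.sum = (l.map (push f)).sum := by
  induction l with
  | nil => simp [push_zero]
  | cons a l ih => simp [push_add, ih]

theorem exists_push_list {n m : ℕ} (f : Fin n → Fin m)
    (P : ((Fin n → Multiset D) × D) → Prop) :
    ∀ l : List ((Fin m → Multiset D) × D),
      (∀ q ∈ l, ∃ Γq, P (Γq, q.2) ∧ q.1 = push f Γq) →
      ∃ l' : List ((Fin n → Multiset D) × D),
        l'.map Prod.snd = l.map Prod.snd ∧ (∀ q ∈ l', P q) ∧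
        (l.map Prod.fst).sum = push f ((l'.map Prod.fst).sum) := by
  intro l
  induction l with
  | nil => exact fun _ => ⟨[], rfl, by simp, by simp [push_zero]⟩
  | cons q l ih =>
    intro h
    obtain ⟨Γq, hP, hq⟩ := h q (List.mem_cons_self)
    obtain ⟨l', hsnd, hPl, hsum⟩ := ih fun q hq => h q (List.mem_cons_of_mem _ hq)
    refine ⟨(Γq, q.2) :: l', by simp [hsnd], ?_, ?_⟩
    · intro r hr
      rcases List.mem_cons.mp hr with rfl | hr
      · exact hP
      · exact hPl r hr
    · simp only [List.map_cons, List.sum_cons, push_add, hq, hsum]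

theorem interp_rename (i : Multiset D × D → D) :
    ∀ {n : ℕ} (t : Tm n) {m : ℕ} (f : Fin n → Fin m)
      (Δ : Fin m → Multiset D) (α : D),
      ((Δ, α) ∈ Interp i (t.rename f) ↔
        ∃ Γ, (Γ, α) ∈ Interp i t ∧ Δ = push f Γ) := by
  intro n t
  induction t with
  | var k =>
    intro m f Δ α
    simp only [Tm.rename, Interp, Set.mem_setOf_eq, Prod.mk.injEq]
    constructor
    · rintro ⟨α', hΔ, rfl⟩
      exact ⟨single k α, ⟨α, rfl, rfl⟩, by rw [hΔ, push_single]⟩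
    · rintro ⟨Γ, ⟨α', hΓ, rfl⟩, rfl⟩
      exact ⟨α, by rw [hΓ, push_single], rfl⟩
  | lam t ih =>
    intro m f Δ α
    simp only [Tm.rename, Interp, Set.mem_setOf_eq, Prod.mk.injEq]
    constructor
    · rintro ⟨Γ₁, a, α₁, hmem, h1, h2⟩
      obtain ⟨Γ', hΓ', hcons⟩ := (ih _ _ _).mp hmem
      rw [← Fin.cons_self_tail Γ', push_lift] at hcons
      have ha : a = Γ' 0 := congrFun hcons 0
      refine ⟨Fin.tail Γ', ⟨Fin.tail Γ', Γ' 0, α₁, ?_, rfl, by rw [h2, ha]⟩, ?_⟩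
      · rw [Fin.cons_self_tail]; exact hΓ'
      · rw [h1]; funext j; exact congrFun hcons j.succ
    · rintro ⟨Γ, ⟨Γ₂, a₂, α₂, hmem, h1, h2⟩, h3⟩
      refine ⟨push f Γ₂, a₂, α₂, ?_, by rw [h3, h1], h2⟩
      exact (ih _ _ _).mpr ⟨Fin.cons a₂ Γ₂, hmem, (push_lift f a₂ Γ₂).symm⟩
  | app t₁ t₂ ih₁ ih₂ =>
    intro m f Δ α
    simp only [Tm.rename, Interp, Set.mem_setOf_eq]
    constructor
    · rintro ⟨Γ₀, l, hm, hl, hΔ⟩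
      obtain ⟨Γ₁, hΓ₁, rfl⟩ := (ih₁ _ _ _).mp hm
      obtain ⟨l', hsnd, hPl, hsum⟩ :=
        exists_push_list f (· ∈ Interp i t₂) l fun q hq => (ih₂ _ _ _).mp (hl q hq)
      refine ⟨Γ₁ + (l'.map Prod.fst).sum, ⟨Γ₁, l', by rw [hsnd]; exact hΓ₁, hPl, rfl⟩, ?_⟩
      rw [hΔ, push_add, hsum]
    · rintro ⟨Γ, ⟨Γ₁, l, hm, hl, hΓ⟩, rfl⟩
      refine ⟨push f Γ₁, l.map fun q => (push f q.1, q.2), ?_, ?_, ?_⟩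
      · have : (List.map Prod.snd (l.map fun q => (push f q.1, q.2))) = l.map Prod.snd := by
          simp [List.map_map, Function.comp]
        rw [this]
        exact (ih₁ _ _ _).mpr ⟨Γ₁, hm, rfl⟩
      · rintro r hr
        simp only [List.mem_map] at hr
        obtain ⟨q, hq, rfl⟩ := hr
        exact (ih₂ _ _ _).mpr ⟨q.1, hl q hq, rfl⟩
      · rw [hΓ, push_add, push_list_sum, List.map_map, List.map_map]; rfl
  | bot =>
    intro m f Δ α
    simp [Tm.rename, Interp]

end Stmt7Aux
namespace Stmt7Aux

/-- Context substitution relation. -/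
inductive SubCtx (i : Multiset D × D → D) {n m : ℕ} (σ : Fin n → Tm m) :
    (Fin n → Multiset D) → (Fin m → Multiset D) → Prop
  | zero : SubCtx i σ 0 0
  | add {Γ Δ} (k : Fin n) (Δ' : Fin m → Multiset D) (β : D) :
      (Δ', β) ∈ Interp i (σ k) → SubCtx i σ Γ Δ →
      SubCtx i σ (Γ + single k β) (Δ + Δ')

theorem SubCtx.addCtx {i : Multiset D × D → D} {n m : ℕ} {σ : Fin n → Tm m}
    {Γ₁ Δ₁ Γ₂ Δ₂ : _} (h₁ : SubCtx i σ Γ₁ Δ₁) (h₂ : SubCtx i σ Γ₂ Δ₂) :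
    SubCtx i σ (Γ₁ + Γ₂) (Δ₁ + Δ₂) := by
  induction h₂ with
  | zero => simpa using h₁
  | add k Δ' β hq hs ih =>
    rw [← add_assoc, ← add_assoc]
    exact ih.add k Δ' β hq

theorem SubCtx.zero_of {i : Multiset D × D → D} {n m : ℕ} {σ : Fin n → Tm m}
    {Γ Δ : _} (h : SubCtx i σ Γ Δ) (hΓ : Γ = 0) : Δ = 0 := by
  cases h with
  | zero => rfl
  | add k Δ' β h1 h2 =>
    exfalso
    have h3 := congrFun hΓ k
    simp only [Pi.add_apply, single, if_pos rfl, Pi.zero_apply] at h3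
    have h4 := congrArg Multiset.card h3
    simp at h4
theorem subctx_single_iff {i : Multiset D × D → D} {n m : ℕ} {σ : Fin n → Tm m}
    {k : Fin n} {α : D} {Δ : Fin m → Multiset D} :
    SubCtx i σ (single k α) Δ ↔ (Δ, α) ∈ Interp i (σ k) := by
  constructor
  · intro h
    generalize hΓ : single k α = Γv at h
    cases h with
    | zero =>
      exfalso
      have := congrFun hΓ k
      simp [single] at this
    | add k' Δ' β h1 h2 =>
      rename_i Γ' Δ₀
      have hk : k' = k := by
        by_contra hk
        have h3 := congrFun hΓ k'
        simp only [single, if_neg hk, Pi.add_apply, if_pos rfl] at h3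
        have h4 := congrArg Multiset.card h3
        simp at h4
      subst hk
      have hkk := congrFun hΓ k'
      simp [single] at hkk
      have hΓ'k : Γ' k' = 0 := by
        have hc := congrArg Multiset.card hkk
        simp only [Multiset.card_singleton, Multiset.card_add, Multiset.card_cons] at hc
        exact Multiset.card_eq_zero.mp (by omega)
      rw [hΓ'k, zero_add] at hkk
      have hβ : α = β := Multiset.singleton_inj.mp hkk
      have hΓ'0 : Γ' = 0 := by
        funext j
        by_cases hj : j = k'
        · simp [hj, hΓ'k]
        · have h5 := congrFun hΓ j
          simpa [single, hj] using h5.symm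
      rw [h2.zero_of hΓ'0, zero_add, hβ]
      exact h1
  · intro h
    have := SubCtx.add k Δ α h (SubCtx.zero (i := i) (σ := σ))
    simpa using this

theorem subctx_split {i : Multiset D × D → D} {n m : ℕ} {σ : Fin n → Tm m}
    {Γ Δ : _} (h : SubCtx i σ Γ Δ) :
    ∀ Γ₁ Γ₂, Γ = Γ₁ + Γ₂ →
      ∃ Δ₁ Δ₂, Δ = Δ₁ + Δ₂ ∧ SubCtx i σ Γ₁ Δ₁ ∧ SubCtx i σ Γ₂ Δ₂ := by
  classical
  induction h with
  | zero =>
    intro Γ₁ Γ₂ h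
    have key : ∀ j, Γ₁ j = 0 ∧ Γ₂ j = 0 := fun j => by
      have := congrFun h j
      simp only [Pi.zero_apply, Pi.add_apply] at this
      exact add_eq_zero.mp this.symm
    have e1 : Γ₁ = 0 := funext fun j => (key j).1
    have e2 : Γ₂ = 0 := funext fun j => (key j).2
    exact ⟨0, 0, by simp, by rw [e1]; exact SubCtx.zero, by rw [e2]; exact SubCtx.zero⟩
  | add k Δ' β hmem hs ih =>
    rename_i Γ₀ Δ₀
    intro Γ₁ Γ₂ h
    have hβmem : β ∈ Γ₁ k ∨ β ∈ Γ₂ k := by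
      have hk := congrFun h k
      simp [single] at hk
      have hb : β ∈ Γ₀ k + {β} := by simp
      rw [hk] at hb
      exact Multiset.mem_add.mp hb
    rcases hβmem with hβ | hβ
    · have hΓ₁ : Γ₁ = (fun j => if j = k then (Γ₁ k).erase β else Γ₁ j) + single k β := by
        funext j
        by_cases hj : j = k
        · subst hj
          have he : (Γ₁ j).erase β + {β} = Γ₁ j := by
            rw [add_comm, Multiset.singleton_add, Multiset.cons_erase hβ]
          simp [single, he]
        · simp [single, hj]
      have hΓ₀ : Γ₀ = (fun j => if j = k then (Γ₁ k).erase β else Γ₁ j) + Γ₂ := by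
        have e : Γ₀ + single k β =
            ((fun j => if j = k then (Γ₁ k).erase β else Γ₁ j) + Γ₂) + single k β := by
          rw [h]
          conv_lhs => rw [hΓ₁]
          rw [add_right_comm]
        exact add_right_cancel e
      obtain ⟨Δ₁, Δ₂, hΔ, hs₁, hs₂⟩ := ih _ Γ₂ hΓ₀
      refine ⟨Δ₁ + Δ', Δ₂, by rw [hΔ, add_right_comm], ?_, hs₂⟩
      rw [hΓ₁]
      exact hs₁.add k Δ' β hmem
    · have hΓ₂ : Γ₂ = (fun j => if j = k then (Γ₂ k).erase β else Γ₂ j) + single k β := by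
        funext j
        by_cases hj : j = k
        · subst hj
          have he : (Γ₂ j).erase β + {β} = Γ₂ j := by
            rw [add_comm, Multiset.singleton_add, Multiset.cons_erase hβ]
          simp [single, he]
        · simp [single, hj]
      have hΓ₀ : Γ₀ = Γ₁ + (fun j => if j = k then (Γ₂ k).erase β else Γ₂ j) := by
        have e : Γ₀ + single k β =
            (Γ₁ + (fun j => if j = k then (Γ₂ k).erase β else Γ₂ j)) + single k β := by
          rw [h]
          conv_lhs => rw [hΓ₂]
          rw [add_assoc]
        exact add_right_cancel e
      obtain ⟨Δ₁, Δ₂, hΔ, hs₁, hs₂⟩ := ih Γ₁ _ hΓ₀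
      refine ⟨Δ₁, Δ₂ + Δ', by rw [hΔ, add_assoc], hs₁, ?_⟩
      rw [hΓ₂]
      exact hs₂.add k Δ' β hmem

end Stmt7Aux
namespace Stmt7Aux

theorem cons_zero_env {n : ℕ} : (Fin.cons (0 : Multiset D) (0 : Fin n → Multiset D)) = (0 : Fin (n+1) → Multiset D) :=
  funext (Fin.cases rfl fun _ => rfl)

theorem cons_add_single_succ {n : ℕ} (a : Multiset D) (Γ : Fin n → Multiset D)
    (k : Fin n) (β : D) :
    Fin.cons a (Γ + single k β) = Fin.cons a Γ + single k.succ β := by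
  funext j
  cases j using Fin.cases with
  | zero => simp [single, Ne.symm (Fin.succ_ne_zero k)]
  | succ j => simp [single, (Fin.succ_injective n).eq_iff]

theorem cons_add_single_zero {n : ℕ} (a : Multiset D) (Γ : Fin n → Multiset D) (β : D) :
    Fin.cons a Γ + single 0 β = Fin.cons (a + {β}) Γ := by
  funext j
  cases j using Fin.cases with
  | zero => simp [single]
  | succ j => simp [single, Fin.succ_ne_zero]

theorem cons_add_cons {n : ℕ} (a b : Multiset D) (Γ Δ : Fin n → Multiset D) :
    (Fin.cons a Γ : Fin (n+1) → Multiset D) + Fin.cons b Δ = Fin.cons (a + b) (Γ + Δ) := by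
  funext j
  cases j using Fin.cases <;> simp

theorem tail_add {n : ℕ} (Γ Δ : Fin (n + 1) → Multiset D) :
    Fin.tail (Γ + Δ) = Fin.tail Γ + Fin.tail Δ := rfl

/-- Induction principle for contexts: every context is built from `0` by
adding single declarations. -/
theorem env_induction {n : ℕ} {P : (Fin n → Multiset D) → Prop} (h0 : P 0)
    (hadd : ∀ Γ (k : Fin n) (β : D), P Γ → P (Γ + single k β)) : ∀ Γ, P Γ := by
  classical
  have key : ∀ (N : ℕ) (Γ : Fin n → Multiset D), (∑ j, Multiset.card (Γ j)) = N → P Γ := by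
    intro N
    induction N with
    | zero =>
      intro Γ hΓ
      have : Γ = 0 := by
        funext j
        have := Finset.sum_eq_zero_iff.mp hΓ j (Finset.mem_univ j)
        simpa using Multiset.card_eq_zero.mp this
      rwa [this]
    | succ N ih =>
      intro Γ hΓ
      have hex : ∃ j, Γ j ≠ 0 := by
        by_contra hc
        push_neg at hc
        simp [hc] at hΓ
      obtain ⟨j, hj⟩ := hex
      obtain ⟨β, hβ⟩ := Multiset.exists_mem_of_ne_zero hj
      have hΓeq : Γ = (fun k => if k = j then (Γ j).erase β else Γ k) + single j β := by
        funext k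
        by_cases hk : k = j
        · subst hk
          have he : (Γ k).erase β + {β} = Γ k := by
            rw [add_comm, Multiset.singleton_add, Multiset.cons_erase hβ]
          simp [single, he]
        · simp [single, hk]
      have hcard : (∑ j', Multiset.card
          ((fun k => if k = j then (Γ j).erase β else Γ k) j')) = N := by
        have h1 : (∑ j', Multiset.card (Γ j')) =
            (∑ j', Multiset.card ((fun k => if k = j then (Γ j).erase β else Γ k) j')) +
              (∑ j', Multiset.card (single j β j')) := by
          conv_lhs => rw [hΓeq]
          simp only [Pi.add_apply, Multiset.card_add]
          rw [Finset.sum_add_distrib]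
        have h2 : (∑ j', Multiset.card (single (D := D) j β j')) = 1 := by
          simp only [single, apply_ite Multiset.card, Multiset.card_singleton,
            Multiset.card_zero]
          rw [Finset.sum_ite_eq' Finset.univ j (fun _ => 1)]
          simp
        omega
      have := hadd _ j β (ih _ hcard)
      rwa [← hΓeq] at this
  exact fun Γ => key _ Γ rfl

end Stmt7Aux
namespace Stmt7Aux

theorem liftσ_succ {n m : ℕ} (σ : Fin n → Tm m) (k : Fin n) :
    liftσ σ k.succ = (σ k).rename Fin.succ := by simp

theorem liftσ_zero {n m : ℕ} (σ : Fin n → Tm m) :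
    liftσ σ 0 = Tm.var 0 := by simp

theorem subctx_lift_succ {i : Multiset D × D → D} {n m : ℕ} {σ : Fin n → Tm m}
    {Γ Δ : _} (h : SubCtx i σ Γ Δ) :
    SubCtx i (liftσ σ) (Fin.cons 0 Γ) (Fin.cons 0 Δ) := by
  induction h with
  | zero => rw [cons_zero_env, cons_zero_env]; exact SubCtx.zero
  | add k Δ' β hmem hs ih =>
    rename_i Γ₀ Δ₀
    have e1 : (Fin.cons (0 : Multiset D) (Γ₀ + single k β) : Fin (n + 1) → Multiset D) =
        Fin.cons (0 : Multiset D) Γ₀ + single k.succ β := cons_add_single_succ 0 Γ₀ k β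
    have e2 : (Fin.cons (0 : Multiset D) (Δ₀ + Δ') : Fin (m + 1) → Multiset D) =
        Fin.cons (0 : Multiset D) Δ₀ + Fin.cons (0 : Multiset D) Δ' := by
      rw [cons_add_cons]; simp
    rw [e1, e2]
    refine ih.add k.succ (Fin.cons 0 Δ') β ?_
    rw [liftσ_succ]
    exact (interp_rename i (σ k) Fin.succ (Fin.cons 0 Δ') β).mpr
      ⟨Δ', hmem, (push_succ Δ').symm⟩

theorem subctx_cons {i : Multiset D × D → D} {n m : ℕ} {σ : Fin n → Tm m}
    {Γ Δ : _} (h : SubCtx i σ Γ Δ) (a : Multiset D) :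
    SubCtx i (liftσ σ) (Fin.cons a Γ) (Fin.cons a Δ) := by
  induction a using Multiset.induction with
  | empty => exact subctx_lift_succ h
  | cons β a ih =>
    have e : ∀ {p : ℕ} (Ξ : Fin p → Multiset D),
        (Fin.cons (β ::ₘ a) Ξ) = Fin.cons a Ξ + single 0 β := by
      intro p Ξ
      have hba : a + {β} = β ::ₘ a := by rw [add_comm, Multiset.singleton_add]
      rw [cons_add_single_zero, hba]
    rw [e Γ, e Δ]
    refine ih.add 0 (single 0 β) β ?_
    rw [liftσ_zero]
    exact ⟨β, rfl⟩

theorem subctx_lift_fwd {i : Multiset D × D → D} {n m : ℕ} {σ : Fin n → Tm m}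
    {Γ' : Fin (n + 1) → Multiset D} {Δ' : Fin (m + 1) → Multiset D}
    (h : SubCtx i (liftσ σ) Γ' Δ') :
    Δ' 0 = Γ' 0 ∧ SubCtx i σ (Fin.tail Γ') (Fin.tail Δ') := by
  induction h with
  | zero => exact ⟨rfl, SubCtx.zero⟩
  | add k Δ₁ β hmem hs ih =>
    rename_i Γ Δ
    cases k using Fin.cases with
    | zero =>
      rw [liftσ_zero] at hmem
      obtain ⟨α, hα⟩ := hmem
      have h1 : Δ₁ = single 0 α := congrArg Prod.fst hα
      have h2 : β = α := congrArg Prod.snd hα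
      subst h2
      have e : ∀ {p : ℕ} (Ξ : Fin (p + 1) → Multiset D),
          Fin.tail (Ξ + single (0 : Fin (p + 1)) β) = Fin.tail Ξ := by
        intro p Ξ; funext j
        simp [Fin.tail, single, Fin.succ_ne_zero]
      constructor
      · simp only [Pi.add_apply, h1, single, if_pos rfl, ih.1]
      · rw [e Γ, h1, e Δ]
        exact ih.2
    | succ j =>
      rw [liftσ_succ] at hmem
      obtain ⟨Θ, hΘ, hΔ₁⟩ := (interp_rename i _ _ _ _).mp hmem
      rw [push_succ] at hΔ₁
      constructor
      · simp only [Pi.add_apply, hΔ₁, single]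
        rw [if_neg (Ne.symm (Fin.succ_ne_zero j))]
        simp [ih.1]
      · have e1 : Fin.tail (Γ + single j.succ β) = Fin.tail Γ + single j β := by
          funext k
          simp [Fin.tail, single, (Fin.succ_injective _).eq_iff]
        have e2 : Fin.tail (Δ + Δ₁) = Fin.tail Δ + Θ := by
          rw [hΔ₁]; funext k; simp [Fin.tail]
        rw [e1, e2]
        exact ih.2.add j Θ β hΘ

theorem subctx_lift_iff {i : Multiset D × D → D} {n m : ℕ} {σ : Fin n → Tm m}
    {Γ' : Fin (n + 1) → Multiset D} {Δ' : Fin (m + 1) → Multiset D} :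
    SubCtx i (liftσ σ) Γ' Δ' ↔ Δ' 0 = Γ' 0 ∧ SubCtx i σ (Fin.tail Γ') (Fin.tail Δ') := by
  refine ⟨subctx_lift_fwd, ?_⟩
  rintro ⟨h0, ht⟩
  have h := subctx_cons ht (Γ' 0)
  rw [Fin.cons_self_tail] at h
  rw [← Fin.cons_self_tail Δ', h0]
  exact h

end Stmt7Aux
namespace Stmt7Aux

theorem subctx_list_fwd {i : Multiset D × D → D} {n m : ℕ} {σ : Fin n → Tm m}
    (P : ((Fin n → Multiset D) × D) → Prop) :
    ∀ l : List ((Fin m → Multiset D) × D),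
      (∀ q ∈ l, ∃ Γq, P (Γq, q.2) ∧ SubCtx i σ Γq q.1) →
      ∃ l' : List ((Fin n → Multiset D) × D), l'.map Prod.snd = l.map Prod.snd ∧
        (∀ q ∈ l', P q) ∧ SubCtx i σ ((l'.map Prod.fst).sum) ((l.map Prod.fst).sum) := by
  intro l
  induction l with
  | nil => exact fun _ => ⟨[], rfl, by simp, SubCtx.zero⟩
  | cons q l ih =>
    intro h
    obtain ⟨Γq, hP, hq⟩ := h q (List.mem_cons_self)
    obtain ⟨l', hsnd, hPl, hsum⟩ := ih fun r hr => h r (List.mem_cons_of_mem _ hr)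
    refine ⟨(Γq, q.2) :: l', by simp [hsnd], ?_, ?_⟩
    · intro r hr
      rcases List.mem_cons.mp hr with rfl | hr
      · exact hP
      · exact hPl r hr
    · simp only [List.map_cons, List.sum_cons]
      exact hq.addCtx hsum

theorem subctx_list_bwd {i : Multiset D × D → D} {n m : ℕ} {σ : Fin n → Tm m}
    (P : ((Fin n → Multiset D) × D) → Prop) (Q : ((Fin m → Multiset D) × D) → Prop)
    (hPQ : ∀ Γq Δq β, P (Γq, β) → SubCtx i σ Γq Δq → Q (Δq, β)) :
    ∀ (l : List ((Fin n → Multiset D) × D)) (Γ₁ Δ : _), (∀ q ∈ l, P q) →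
      SubCtx i σ (Γ₁ + (l.map Prod.fst).sum) Δ →
      ∃ (Δ₁ : Fin m → Multiset D) (l' : List ((Fin m → Multiset D) × D)),
        l'.map Prod.snd = l.map Prod.snd ∧
        (∀ q ∈ l', Q q) ∧ SubCtx i σ Γ₁ Δ₁ ∧ Δ = Δ₁ + (l'.map Prod.fst).sum := by
  intro l
  induction l with
  | nil =>
    intro Γ₁ Δ _ h
    exact ⟨Δ, [], rfl, by simp, by simpa using h, by simp⟩
  | cons q l ih =>
    intro Γ₁ Δ hP h
    have h' : SubCtx i σ ((Γ₁ + (l.map Prod.fst).sum) + q.1) Δ := by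
      rw [add_assoc]
      simpa [add_comm, add_assoc, add_left_comm] using h
    obtain ⟨Δa, Δq, hΔ, hsa, hsq⟩ := subctx_split h' _ _ rfl
    obtain ⟨Δ₁, l', hsnd, hQ, hs₁, hΔa⟩ :=
      ih Γ₁ Δa (fun r hr => hP r (List.mem_cons_of_mem _ hr)) hsa
    refine ⟨Δ₁, (Δq, q.2) :: l', by simp [hsnd], ?_, hs₁, ?_⟩
    · intro r hr
      rcases List.mem_cons.mp hr with rfl | hr
      · exact hPQ q.1 Δq q.2 (hP q (List.mem_cons_self)) hsq
      · exact hQ r hr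
    · rw [hΔ, hΔa]
      simp only [List.map_cons, List.sum_cons]
      rw [add_assoc, add_comm Δq]

theorem interp_subst (i : Multiset D × D → D) :
    ∀ {n : ℕ} (t : Tm n) {m : ℕ} (σ : Fin n → Tm m)
      (Δ : Fin m → Multiset D) (α : D),
      ((Δ, α) ∈ Interp i (t.subst σ) ↔
        ∃ Γ, (Γ, α) ∈ Interp i t ∧ SubCtx i σ Γ Δ) := by
  intro n t
  induction t with
  | var k =>
    intro m σ Δ α
    show (Δ, α) ∈ Interp i (σ k) ↔ _
    constructor
    · intro h
      exact ⟨single k α, ⟨α, rfl⟩, subctx_single_iff.mpr h⟩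
    · rintro ⟨Γ, ⟨α', hΓ⟩, hs⟩
      have h1 : Γ = single k α' := congrArg Prod.fst hΓ
      have h2 : α = α' := congrArg Prod.snd hΓ
      subst h2
      rw [h1] at hs
      exact subctx_single_iff.mp hs
  | lam t ih =>
    intro m σ Δ α
    show (Δ, α) ∈ Interp i (Tm.lam (t.subst (liftσ σ))) ↔ _
    simp only [Interp, Set.mem_setOf_eq, Prod.mk.injEq]
    constructor
    · rintro ⟨Δ₁, a, α₁, hmem, h1, h2⟩
      obtain ⟨Γ', hΓ', hsub⟩ := (ih _ _ _).mp hmem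
      obtain ⟨h0, ht⟩ := subctx_lift_fwd hsub
      rw [Fin.cons_zero] at h0
      rw [Fin.tail_cons] at ht
      refine ⟨Fin.tail Γ', ⟨Fin.tail Γ', Γ' 0, α₁, ?_, rfl, by rw [h2, ← h0]⟩, ?_⟩
      · rw [Fin.cons_self_tail]; exact hΓ'
      · rw [h1]; exact ht
    · rintro ⟨Γ, ⟨Γ₂, a₂, α₂, hmem, h1, h2⟩, hs⟩
      refine ⟨Δ, a₂, α₂, ?_, rfl, h2⟩
      refine (ih _ _ _).mpr ⟨Fin.cons a₂ Γ₂, hmem, ?_⟩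
      refine subctx_lift_iff.mpr ⟨rfl, ?_⟩
      rw [Fin.tail_cons, Fin.tail_cons]
      rw [h1] at hs
      exact hs
  | app t₁ t₂ ih₁ ih₂ =>
    intro m σ Δ α
    show (Δ, α) ∈ Interp i (Tm.app (t₁.subst σ) (t₂.subst σ)) ↔ _
    simp only [Interp, Set.mem_setOf_eq]
    constructor
    · rintro ⟨Δ₀, l, hm, hl, hΔ⟩
      obtain ⟨Γ₁, hΓ₁, hsub₁⟩ := (ih₁ _ _ _).mp hm
      obtain ⟨l', hsnd, hPl, hsum⟩ :=
        subctx_list_fwd (· ∈ Interp i t₂) l fun q hq => (ih₂ _ _ _).mp (hl q hq)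
      refine ⟨Γ₁ + (l'.map Prod.fst).sum, ⟨Γ₁, l', ?_, hPl, rfl⟩, ?_⟩
      · rw [hsnd]; exact hΓ₁
      · rw [hΔ]
        exact hsub₁.addCtx hsum
    · rintro ⟨Γ, ⟨Γ₁, lΓ, hm, hl, hΓ⟩, hs⟩
      rw [hΓ] at hs
      obtain ⟨Δ₁, l', hsnd, hQ, hs₁, hΔ⟩ :=
        subctx_list_bwd (· ∈ Interp i t₂) (· ∈ Interp i (t₂.subst σ))
          (fun Γq Δq β hP hsq => (ih₂ _ _ _).mpr ⟨Γq, hP, hsq⟩) lΓ Γ₁ Δ hl hs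
      refine ⟨Δ₁, l', ?_, hQ, hΔ⟩
      rw [hsnd]
      exact (ih₁ _ _ _).mpr ⟨Γ₁, hm, hs₁⟩
  | bot =>
    intro m σ Δ α
    show (Δ, α) ∈ Interp i Tm.bot ↔ _
    simp [Interp]

end Stmt7Aux
namespace Stmt7Aux

/-- The substitution `[N/x₀]`. -/
abbrev σβ {n : ℕ} (N : Tm n) : Fin (n + 1) → Tm n :=
  Fin.cases (motive := fun _ => Tm n) N Tm.var

theorem subctx_beta_fwd {i : Multiset D × D → D} {n : ℕ} {N : Tm n}
    {Γ : Fin (n + 1) → Multiset D} {Δ : Fin n → Multiset D}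
    (h : SubCtx i (σβ N) Γ Δ) :
    ∃ l : List ((Fin n → Multiset D) × D), (↑(l.map Prod.snd) : Multiset D) = Γ 0 ∧
      (∀ q ∈ l, q ∈ Interp i N) ∧ Δ = Fin.tail Γ + (l.map Prod.fst).sum := by
  induction h with
  | zero => exact ⟨[], rfl, by simp, by simp; rfl⟩
  | add k Δ' β hmem hs ih =>
    rename_i Γ₀ Δ₀
    obtain ⟨l, hsnd, hl, hΔ⟩ := ih
    cases k using Fin.cases with
    | zero =>
      have hmem' : (Δ', β) ∈ Interp i N := by simpa using hmem
      refine ⟨(Δ', β) :: l, ?_, ?_, ?_⟩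
      · simp only [List.map_cons, Multiset.cons_coe, Pi.add_apply, single]
        rw [if_true, ← hsnd, add_comm, Multiset.singleton_add]
        exact Multiset.cons_coe β _
      · intro r hr
        rcases List.mem_cons.mp hr with rfl | hr
        · exact hmem'
        · exact hl r hr
      · have e : Fin.tail (Γ₀ + single (0 : Fin (n + 1)) β) = Fin.tail Γ₀ := by
          funext j; simp [Fin.tail, single, Fin.succ_ne_zero]
        rw [e, hΔ]
        simp only [List.map_cons, List.sum_cons]
        rw [add_assoc, add_comm Δ']
    | succ j =>
      have hmem' : (Δ', β) ∈ Interp i (Tm.var j) := by simpa using hmem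
      obtain ⟨α, hα⟩ := hmem'
      have h1 : Δ' = single j α := congrArg Prod.fst hα
      have h2 : β = α := congrArg Prod.snd hα
      subst h2
      refine ⟨l, ?_, hl, ?_⟩
      · rw [hsnd]
        simp [single, Ne.symm (Fin.succ_ne_zero j)]
      · have e : Fin.tail (Γ₀ + single j.succ β) = Fin.tail Γ₀ + single j β := by
          funext k
          simp [Fin.tail, single, (Fin.succ_injective _).eq_iff]
        rw [e, hΔ, h1, add_right_comm]

theorem subctx_beta_bwd {i : Multiset D × D → D} {n : ℕ} {N : Tm n}
    (l : List ((Fin n → Multiset D) × D)) (hl : ∀ q ∈ l, q ∈ Interp i N)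
    (Γt : Fin n → Multiset D) :
    SubCtx i (σβ N) (Fin.cons (↑(l.map Prod.snd)) Γt) (Γt + (l.map Prod.fst).sum) := by
  induction l with
  | nil =>
    simp only [List.map_nil, List.sum_nil, add_zero, Multiset.coe_nil]
    refine env_induction
      (P := fun Γ => SubCtx i (σβ N) (Fin.cons (0 : Multiset D) Γ) Γ) ?_ ?_ Γt
    · show SubCtx i (σβ N) (Fin.cons (0 : Multiset D) (0 : Fin n → Multiset D)) 0
      rw [cons_zero_env]
      exact SubCtx.zero
    · intro Γ k β hP
      rw [cons_add_single_succ]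
      refine hP.add k.succ (single k β) β ?_
      simpa using ⟨β, rfl⟩
  | cons q l ih =>
    have ih' := ih fun r hr => hl r (List.mem_cons_of_mem _ hr)
    have h := ih'.add 0 q.1 q.2 (by simpa using hl q (List.mem_cons_self))
    rw [cons_add_single_zero] at h
    have e1 : ((↑(l.map Prod.snd) : Multiset D) + {q.2}) =
        ↑((q :: l).map Prod.snd) := by
      simp [add_comm, Multiset.singleton_add]
    have e2 : Γt + (l.map Prod.fst).sum + q.1 = Γt + ((q :: l).map Prod.fst).sum := by
      simp only [List.map_cons, List.sum_cons]
      rw [add_assoc, add_comm q.1]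
    rw [e1, e2] at h
    exact h

theorem interp_redex (i : Multiset D × D → D) (hi : Function.Injective i) {n : ℕ}
    (M : Tm (n + 1)) (N : Tm n) :
    Interp i (Tm.app (Tm.lam M) N) = Interp i (M.subst1 N) := by
  ext ⟨Δ, α⟩
  show _ ↔ (Δ, α) ∈ Interp i (M.subst (σβ N))
  rw [interp_subst]
  simp only [Interp, Set.mem_setOf_eq, Prod.mk.injEq]
  constructor
  · rintro ⟨Γ₀, l, ⟨Γ', a, α', hM, h1, h2⟩, hl, hΔ⟩
    obtain ⟨ha, hα⟩ := Prod.mk.injEq .. ▸ hi h2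
    refine ⟨Fin.cons (↑(l.map Prod.snd)) Γ₀, ?_, ?_⟩
    · rw [← ha, ← h1, ← hα] at hM
      exact hM
    · rw [hΔ]
      exact subctx_beta_bwd l hl Γ₀
  · rintro ⟨Γ, hM, hsub⟩
    obtain ⟨l, hsnd, hl, hΔ⟩ := subctx_beta_fwd hsub
    exact ⟨Fin.tail Γ, l, ⟨Fin.tail Γ, Γ 0, α, by rw [Fin.cons_self_tail]; exact hM,
      rfl, by rw [hsnd]⟩, hl, hΔ⟩

theorem beta_sound (i : Multiset D × D → D) (hi : Function.Injective i) :
    ∀ {n : ℕ} {M N : Tm n}, Beta M N → Interp i M = Interp i N := by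
  intro n M N h
  induction h with
  | redex M N => exact interp_redex i hi M N
  | appL h ih => ext ⟨Δ, α⟩; simp only [Interp, Set.mem_setOf_eq, ih]
  | appR h ih => ext ⟨Δ, α⟩; simp only [Interp, Set.mem_setOf_eq, ih]
  | lam h ih => ext ⟨Δ, α⟩; simp only [Interp, Set.mem_setOf_eq, ih]

end Stmt7Aux

/-- Soundness of relational graph models: β-convertible λ-terms have the same
relational interpretation. -/
theorem stmt_7 {D : Type} [Infinite D] (i : Multiset D × D → D)
    (hi : Function.Injective i) {n : ℕ} (M N : Tm n)
    (hM : BotFree M) (hN : BotFree N)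
    (h : Relation.EqvGen (fun a b : Tm n => Beta a b) M N) :
    Interp i M = Interp i N := by
  clear hM hN
  induction h with
  | rel a b hab => exact Stmt7Aux.beta_sound i hi hab
  | refl a => rfl
  | symm a b _ ih => exact ih.symm
  | trans a b c _ _ ih1 ih2 => exact ih1.trans ih2
end

section
/- Weighted substitution lemma: let π₀ be a derivation of Γ₀, x : [β₁,…,β_n] ⊢_D M : α and πᵢ derivations of Γᵢ ⊢_D N : βᵢ for 1 ≤ i ≤ n. Then there exists a derivation π of Σ_{i=0}^n Γᵢ ⊢_D M{N/x} : α with #app(π) = Σ_{i=0}^n #app(πᵢ), where #app counts occurrences of the application rule in a derivation. -/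
section Aux
variable {D : Type}

lemma lsum_apply {n : ℕ} (l : List (Fin n → Multiset D)) (j : Fin n) :
    l.sum j = (l.map (fun f => f j)).sum := by
  induction l with
  | nil => rfl
  | cons a l ih => simp [List.sum_cons, ih]

lemma msum_apply {n : ℕ} (s : Multiset (Fin n → Multiset D)) (j : Fin n) :
    s.sum j = (s.map (fun f => f j)).sum := by
  induction s using Multiset.induction with
  | empty => rfl
  | cons a s ih => simp [ih]

lemma split2 {T : Type} (f : T → D) :
    ∀ (s : Multiset D) (t : Multiset D) (L : Multiset T), L.map f = s + t →
    ∃ L₁ L₂, L = L₁ + L₂ ∧ L₁.map f = s ∧ L₂.map f = t := by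
  intro s
  induction s using Multiset.induction with
  | empty => intro t L h; exact ⟨0, L, by simp, by simp, by simpa using h⟩
  | cons a s ih =>
    intro t L h
    have ha : a ∈ L.map f := by rw [h]; simp
    obtain ⟨x, hx, hfx⟩ := Multiset.mem_map.mp ha
    obtain ⟨L', hL'⟩ := Multiset.exists_cons_of_mem hx
    subst hL'
    have h' : L'.map f = s + t := by
      have := h
      rw [Multiset.map_cons, hfx, Multiset.cons_add] at this
      exact (Multiset.cons_inj_right a).mp this
    obtain ⟨L₁, L₂, hL, h1, h2⟩ := ih t L' h'
    exact ⟨x ::ₘ L₁, L₂, by rw [hL, Multiset.cons_add], by simp [h1, hfx], h2⟩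

/-- Pushforward of an environment along a renaming. -/
def rmap {n m : ℕ} (f : Fin n → Fin m) (Γ : Fin n → Multiset D) : Fin m → Multiset D :=
  fun j => ∑ k, if f k = j then Γ k else 0

lemma rmap_single {n m : ℕ} (f : Fin n → Fin m) (k : Fin n) (α : D) :
    rmap f (single k α) = single (f k) α := by
  funext j
  simp only [rmap, single]
  rw [Finset.sum_eq_single k]
  · simp [eq_comm]
  · intro b _ hb; simp [hb]
  · simp

lemma rmap_zero {n m : ℕ} (f : Fin n → Fin m) : rmap f (0 : Fin n → Multiset D) = 0 := by
  funext j; simp [rmap]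

lemma rmap_add {n m : ℕ} (f : Fin n → Fin m) (Γ Δ : Fin n → Multiset D) :
    rmap f (Γ + Δ) = rmap f Γ + rmap f Δ := by
  funext j
  simp only [rmap, Pi.add_apply, ← Finset.sum_add_distrib]
  apply Finset.sum_congr rfl
  intro k _
  split <;> simp

lemma rmap_listsum {n m : ℕ} (f : Fin n → Fin m) (L : List (Fin n → Multiset D)) :
    rmap f L.sum = (L.map (rmap f)).sum := by
  induction L with
  | nil => simpa using rmap_zero f
  | cons a L ih => simp [rmap_add, ih]

lemma rmap_cons {n m : ℕ} (f : Fin n → Fin m) (a : Multiset D) (Γ : Fin n → Multiset D) :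
    rmap (fun k => Fin.cases (motive := fun _ => Fin (m + 1)) 0 (fun j => (f j).succ) k)
      (Fin.cons a Γ) = Fin.cons a (rmap f Γ) := by
  funext j
  induction j using Fin.cases with
  | zero =>
    simp [rmap, Fin.sum_univ_succ, Fin.succ_ne_zero]
  | succ j =>
    simp only [rmap, Fin.sum_univ_succ, Fin.cases_zero, Fin.cons_zero, Fin.cons_succ]
    have h0 : (if (0 : Fin (m+1)) = j.succ then a else 0) = 0 := by
      simp [(Fin.succ_ne_zero j).symm]
    rw [h0, zero_add]
    apply Finset.sum_congr rfl
    intro k _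
    simp [Fin.succ_inj]

lemma rmap_succ {n : ℕ} (Γ : Fin n → Multiset D) :
    rmap Fin.succ Γ = Fin.cons 0 Γ := by
  funext j
  induction j using Fin.cases with
  | zero => simp [rmap, Fin.succ_ne_zero]
  | succ j =>
    simp only [rmap, Fin.cons_succ]
    rw [Finset.sum_eq_single j] <;> simp_all [Fin.succ_inj]

lemma der_rename (i : Multiset D × D → D) :
    ∀ {n : ℕ} {Γ : Fin n → Multiset D} {M : Tm n} {α : D} {m : ℕ},
    Der i Γ M α m → ∀ {n' : ℕ} (f : Fin n → Fin n'),
    Der i (rmap f Γ) (M.rename f) α m := by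
  intro n Γ M α m h
  induction h with
  | var k α => intro n' f; rw [rmap_single]; exact Der.var (f k) α
  | lam h ih =>
    intro n' f
    rw [Tm.rename]
    refine Der.lam ?_
    rw [← rmap_cons]
    exact ih _
  | @app n1 Γ1 M1 N1 α1 m1 l hM hN ihM ihN =>
    intro n' f
    rw [Tm.rename, rmap_add]
    have e1 : (l.map (fun q => (rmap f q.1, q.2))).map (fun q => q.2.1)
        = l.map (fun q => q.2.1) := by simp [List.map_map, Function.comp]
    have e2 : (l.map (fun q => (rmap f q.1, q.2))).map (fun q => q.2.2)
        = l.map (fun q => q.2.2) := by simp [List.map_map, Function.comp]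
    have e3 : (l.map (fun q => (rmap f q.1, q.2))).map (fun q => q.1)
        = (l.map (fun q => q.1)).map (rmap f) := by simp [List.map_map, Function.comp]
    have hMn : Der i (rmap f Γ1) (Tm.rename f M1)
        (i (↑((l.map (fun q => (rmap f q.1, q.2))).map (fun q => q.2.1)), α1)) m1 := by
      rw [e1]; exact ihM f
    have hNn : ∀ q ∈ l.map (fun q => (rmap f q.1, q.2)),
        Der i q.1 (Tm.rename f N1) q.2.1 q.2.2 := by
      intro q hq
      obtain ⟨p, hp, rfl⟩ := List.mem_map.mp hq
      exact ihN p hp f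
    have := Der.app _ hMn hNn
    rw [e2, e3, ← rmap_listsum] at this
    exact this
end Aux

section Subst
variable {D : Type}

lemma appAux (i : Multiset D × D → D) {n n' : ℕ} (σ : Fin n → Tm n') (N2 : Tm n) :
    ∀ (l : List ((Fin n → Multiset D) × D × ℕ))
      (L : Fin n → Multiset ((Fin n' → Multiset D) × D × ℕ)),
    (∀ k, (L k).map (fun q => q.2.1) = ((l.map (Prod.fst)).sum) k) →
    (∀ k, ∀ q ∈ L k, Der i q.1 (σ k) q.2.1 q.2.2) →
    (∀ p ∈ l, ∀ (L' : Fin n → Multiset ((Fin n' → Multiset D) × D × ℕ)),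
       (∀ k, (L' k).map (fun q => q.2.1) = p.1 k) →
       (∀ k, ∀ q ∈ L' k, Der i q.1 (σ k) q.2.1 q.2.2) →
       Der i (∑ k, ((L' k).map (fun q => q.1)).sum) (N2.subst σ) p.2.1
         (p.2.2 + ∑ k, ((L' k).map (fun q => q.2.2)).sum)) →
    ∃ l' : List ((Fin n' → Multiset D) × D × ℕ),
      l'.map (fun q => q.2.1) = l.map (fun q => q.2.1) ∧
      (∀ q ∈ l', Der i q.1 (N2.subst σ) q.2.1 q.2.2) ∧
      (l'.map (fun q => q.1)).sum = ∑ k, ((L k).map (fun q => q.1)).sum ∧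
      (l'.map (fun q => q.2.2)).sum
        = (l.map (fun q => q.2.2)).sum + ∑ k, ((L k).map (fun q => q.2.2)).sum := by
  intro l
  induction l with
  | nil =>
    intro L htyp _ _
    have hL : ∀ k, L k = 0 := by
      intro k
      have := htyp k
      simp at this
      exact this
    refine ⟨[], by simp, by simp, ?_, ?_⟩ <;> simp [hL]
  | cons p l ih =>
    intro L htyp hder hsub
    have hsplit : ∀ k, ∃ A B : Multiset ((Fin n' → Multiset D) × D × ℕ), L k = A + B ∧
        A.map (fun q => q.2.1) = p.1 k ∧
        B.map (fun q => q.2.1) = ((l.map (Prod.fst)).sum) k := by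
      intro k
      apply split2
      have := htyp k
      simpa [Pi.add_apply] using this
    choose A B hAB hA hB using hsplit
    have hderA : ∀ k, ∀ q ∈ A k, Der i q.1 (σ k) q.2.1 q.2.2 := by
      intro k q hq; exact hder k q (by rw [hAB k]; exact Multiset.mem_add.mpr (Or.inl hq))
    have hderB : ∀ k, ∀ q ∈ B k, Der i q.1 (σ k) q.2.1 q.2.2 := by
      intro k q hq; exact hder k q (by rw [hAB k]; exact Multiset.mem_add.mpr (Or.inr hq))
    have dp := hsub p List.mem_cons_self A hA hderA
    obtain ⟨l'', h1, h2, h3, h4⟩ := ih B hB hderB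
      (fun p hp => hsub p (List.mem_cons_of_mem _ hp))
    refine ⟨(∑ k, ((A k).map (fun q => q.1)).sum, p.2.1,
      p.2.2 + ∑ k, ((A k).map (fun q => q.2.2)).sum) :: l'', ?_, ?_, ?_, ?_⟩
    · simp [h1]
    · intro q hq
      rcases List.mem_cons.mp hq with rfl | hq
      · exact dp
      · exact h2 q hq
    · simp only [List.map_cons, List.sum_cons, h3]
      rw [← Finset.sum_add_distrib]
      apply Finset.sum_congr rfl
      intro k _
      rw [hAB k]
      simp [Multiset.map_add, Multiset.sum_add]
    · simp only [List.map_cons, List.sum_cons, h4]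
      have : ∀ k, ((L k).map (fun q => q.2.2)).sum
          = ((A k).map (fun q => q.2.2)).sum + ((B k).map (fun q => q.2.2)).sum := by
        intro k; rw [hAB k]; simp [Multiset.map_add, Multiset.sum_add]
      simp only [this, Finset.sum_add_distrib]
      omega

lemma der_subst (i : Multiset D × D → D) :
    ∀ {n : ℕ} {Δ : Fin n → Multiset D} {M : Tm n} {α : D} {m : ℕ},
    Der i Δ M α m →
    ∀ {n' : ℕ} (σ : Fin n → Tm n')
      (L : Fin n → Multiset ((Fin n' → Multiset D) × D × ℕ)),
    (∀ k, (L k).map (fun q => q.2.1) = Δ k) →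
    (∀ k, ∀ q ∈ L k, Der i q.1 (σ k) q.2.1 q.2.2) →
    Der i (∑ k, ((L k).map (fun q => q.1)).sum) (M.subst σ) α
      (m + ∑ k, ((L k).map (fun q => q.2.2)).sum) := by
  intro n Δ M α m h
  induction h with
  | var k α =>
    intro n' σ L htyp hder
    have hzero : ∀ j, j ≠ k → L j = 0 := by
      intro j hj
      have := htyp j
      simp [single, hj] at this
      exact this
    have hk : ∃ q, L k = {q} ∧ q.2.1 = α := by
      have := htyp k
      simp [single] at this
      obtain ⟨q, h1, h2⟩ := Multiset.map_eq_singleton.mp this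
      exact ⟨q, h1, h2⟩
    obtain ⟨q, hLk, hqα⟩ := hk
    have hc : (∑ j, ((L j).map (fun q => q.1)).sum) = q.1 := by
      rw [Finset.sum_eq_single k]
      · rw [hLk]; simp
      · intro b _ hb; rw [hzero b hb]; simp
      · simp
    have hw : (∑ j, ((L j).map (fun q => q.2.2)).sum) = q.2.2 := by
      rw [Finset.sum_eq_single k]
      · rw [hLk]; simp
      · intro b _ hb; rw [hzero b hb]; simp
      · simp
    rw [hc, hw, Nat.zero_add]
    rw [← hqα]
    exact hder k q (by rw [hLk]; simp)
  | @lam n1 Γ1 a M1 α1 m1 h ih =>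
    intro n' σ L htyp hder
    set σ' : Fin (n1 + 1) → Tm (n' + 1) := fun k =>
      Fin.cases (motive := fun _ => Tm (n' + 1)) (.var 0)
        (fun j => (σ j).rename Fin.succ) k with hσ'
    set L' : Fin (n1 + 1) → Multiset ((Fin (n' + 1) → Multiset D) × D × ℕ) :=
      Fin.cons (a.map (fun β => (single (0 : Fin (n' + 1)) β, β, 0)))
        (fun j => (L j).map (fun q =>
          (Fin.cons (α := fun _ : Fin (n' + 1) => Multiset D) 0 q.1, q.2))) with hL'
    have htyp' : ∀ k, (L' k).map (fun q => q.2.1) = (Fin.cons (α := fun _ : Fin (n1+1) => Multiset D) a Γ1) k := by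
      intro k
      induction k using Fin.cases with
      | zero => simp [hL', Multiset.map_map]
      | succ j => simp [hL', Multiset.map_map, htyp j]
    have hder' : ∀ k, ∀ q ∈ L' k, Der i q.1 (σ' k) q.2.1 q.2.2 := by
      intro k
      induction k using Fin.cases with
      | zero =>
        intro q hq
        simp only [hL', Fin.cons_zero, Multiset.mem_map] at hq
        obtain ⟨β, _, rfl⟩ := hq
        exact Der.var (0 : Fin (n' + 1)) β
      | succ j =>
        intro q hq
        simp only [hL', Fin.cons_succ, Multiset.mem_map] at hq
        obtain ⟨p, hp, rfl⟩ := hq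
        have := der_rename i (hder j p hp) Fin.succ
        rw [rmap_succ] at this
        exact this
    have IH := ih σ' L' htyp' hder'
    have hctx : (∑ k, ((L' k).map (fun q => q.1)).sum)
        = Fin.cons a (∑ k, ((L k).map (fun q => q.1)).sum) := by
      rw [Fin.sum_univ_succ]
      funext j
      induction j using Fin.cases with
      | zero =>
        simp [hL', Pi.add_apply, Finset.sum_apply, msum_apply, Multiset.map_map,
          Function.comp, Function.comp_def, single]
      | succ p =>
        simp [hL', Pi.add_apply, Finset.sum_apply, msum_apply, Multiset.map_map,
          Function.comp, Function.comp_def, single, Fin.succ_ne_zero]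
    have hwt : (∑ k, ((L' k).map (fun q => q.2.2)).sum)
        = ∑ k, ((L k).map (fun q => q.2.2)).sum := by
      rw [Fin.sum_univ_succ]
      simp only [hL', Fin.cons_zero, Fin.cons_succ, Multiset.map_map]
      simp [Function.comp]
    rw [hctx, hwt] at IH
    exact Der.lam IH
  | @app n1 Γ1 M1 N1 α1 m1 l hM hN ihM ihN =>
    intro n' σ L htyp hder
    have hsplit : ∀ k, ∃ A B : Multiset ((Fin n' → Multiset D) × D × ℕ), L k = A + B ∧
        A.map (fun q => q.2.1) = Γ1 k ∧
        B.map (fun q => q.2.1) = ((l.map (Prod.fst)).sum) k := by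
      intro k
      apply split2
      have := htyp k
      simpa [Pi.add_apply] using this
    choose A B hAB hA hB using hsplit
    have hderA : ∀ k, ∀ q ∈ A k, Der i q.1 (σ k) q.2.1 q.2.2 := by
      intro k q hq; exact hder k q (by rw [hAB k]; exact Multiset.mem_add.mpr (Or.inl hq))
    have hderB : ∀ k, ∀ q ∈ B k, Der i q.1 (σ k) q.2.1 q.2.2 := by
      intro k q hq; exact hder k q (by rw [hAB k]; exact Multiset.mem_add.mpr (Or.inr hq))
    have IHM := ihM σ A hA hderA
    obtain ⟨l', h1, h2, h3, h4⟩ := appAux i σ N1 l B hB hderB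
      (fun p hp L' ht hd => ihN p hp σ L' ht hd)
    have hM' : Der i (∑ k, ((A k).map (fun q => q.1)).sum) (M1.subst σ)
        (i (↑(l'.map (fun q => q.2.1)), α1)) (m1 + ∑ k, ((A k).map (fun q => q.2.2)).sum) := by
      rw [h1]; exact IHM
    have happ := Der.app l' hM' h2
    have hctx : (∑ k, ((A k).map (fun q => q.1)).sum) + (l'.map (fun q => q.1)).sum
        = ∑ k, ((L k).map (fun q => q.1)).sum := by
      rw [h3, ← Finset.sum_add_distrib]
      apply Finset.sum_congr rfl
      intro k _
      rw [hAB k]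
      simp [Multiset.map_add, Multiset.sum_add]
    have hwt : ∀ k, ((L k).map (fun q => q.2.2)).sum
        = ((A k).map (fun q => q.2.2)).sum + ((B k).map (fun q => q.2.2)).sum := by
      intro k; rw [hAB k]; simp [Multiset.map_add, Multiset.sum_add]
    rw [hctx] at happ
    have hwteq : (m1 + ∑ k, ((A k).map (fun q => q.2.2)).sum)
        + (l'.map (fun q => q.2.2)).sum + 1
        = m1 + (l.map (fun q => q.2.2)).sum + 1 + ∑ k, ((L k).map (fun q => q.2.2)).sum := by
      simp only [hwt, Finset.sum_add_distrib, h4]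
      omega
    rw [hwteq] at happ
    exact happ
end Subst

/-- Weighted substitution lemma: from a derivation of `Γ₀, x : [β₁,…,β_k] ⊢ M : α`
with weight `m₀` and derivations `Γᵢ ⊢ N : βᵢ` with weights `mᵢ`, one obtains a
derivation of `Σᵢ Γᵢ ⊢ M{N/x} : α` whose number of application rules is exactly
the sum of those of the premises. -/
theorem stmt_9 {D : Type} [Infinite D] (i : Multiset D × D → D)
    (hi : Function.Injective i) {n : ℕ} {Γ₀ : Fin n → Multiset D}
    {M : Tm (n + 1)} {N : Tm n} {α : D} {m₀ : ℕ}
    (l : List ((Fin n → Multiset D) × D × ℕ))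
    (h₀ : Der i (Fin.cons (↑(l.map fun q => q.2.1) : Multiset D) Γ₀) M α m₀)
    (h : ∀ q ∈ l, Der i q.1 N q.2.1 q.2.2) :
    Der i (Γ₀ + (l.map fun q => q.1).sum) (M.subst1 N) α
      (m₀ + (l.map fun q => q.2.2).sum) := by
  set σ : Fin (n + 1) → Tm n :=
    fun k => Fin.cases (motive := fun _ => Tm n) N Tm.var k with hσ
  set L : Fin (n + 1) → Multiset ((Fin n → Multiset D) × D × ℕ) :=
    Fin.cons (α := fun _ : Fin (n + 1) => Multiset ((Fin n → Multiset D) × D × ℕ))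
      (↑l) (fun j => (Γ₀ j).map (fun β => (single j β, β, 0))) with hL
  have htyp : ∀ k, (L k).map (fun q => q.2.1)
      = (Fin.cons (α := fun _ : Fin (n+1) => Multiset D)
          (↑(l.map fun q => q.2.1) : Multiset D) Γ₀) k := by
    intro k
    induction k using Fin.cases with
    | zero => simp [hL]
    | succ j => simp [hL, Multiset.map_map, Function.comp]
  have hder : ∀ k, ∀ q ∈ L k, Der i q.1 (σ k) q.2.1 q.2.2 := by
    intro k
    induction k using Fin.cases with
    | zero =>
      intro q hq
      have hql : q ∈ l := by simpa [hL] using hq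
      simpa [hσ] using h q hql
    | succ j =>
      intro q hq
      simp only [hL, Fin.cons_succ, Multiset.mem_map] at hq
      obtain ⟨β, hβ, rfl⟩ := hq
      simpa [hσ] using Der.var j β
  have hsub := der_subst i h₀ σ L htyp hder
  have hc : (∑ k, ((L k).map (fun q => q.1)).sum) = Γ₀ + (l.map fun q => q.1).sum := by
    rw [Fin.sum_univ_succ]
    funext p
    simp only [hL, Fin.cons_zero, Fin.cons_succ, Pi.add_apply, Finset.sum_apply]
    have h0 : (((↑l : Multiset ((Fin n → Multiset D) × D × ℕ)).map
        (fun q : (Fin n → Multiset D) × D × ℕ => q.1)).sum) p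
        = (l.map (fun q : (Fin n → Multiset D) × D × ℕ => q.1)).sum p := by
      rw [Multiset.map_coe, Multiset.sum_coe]
    have hs : (∑ x : Fin n,
        ((((Γ₀ x).map (fun β => ((single x β, β, 0) : (Fin n → Multiset D) × D × ℕ))).map
          (fun q : (Fin n → Multiset D) × D × ℕ => q.1)).sum) p) = Γ₀ p := by
      rw [Finset.sum_eq_single p]
      · rw [msum_apply]
        simp [Multiset.map_map, Function.comp, Function.comp_def, single]
      · intro b _ hb
        rw [msum_apply]
        simp [Multiset.map_map, Function.comp, Function.comp_def, single, (Ne.symm hb)]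
      · simp
    rw [h0, hs, add_comm]
  have hw : (∑ k, ((L k).map (fun q => q.2.2)).sum) = (l.map fun q => q.2.2).sum := by
    rw [Fin.sum_univ_succ]
    simp only [hL, Fin.cons_zero, Fin.cons_succ]
    rw [Multiset.map_coe, Multiset.sum_coe]
    simp [Multiset.map_map, Function.comp]
  rw [hc, hw] at hsub
  exact hsub
end

section
/- If a λ⊥-term M has a typing derivation π with #app(π) = k in the type system of a relational graph model, then the head reduction sequence starting from M terminates in at most k steps (M reaches a head normal form after at most k head-reduction steps). -/
/-- One step of head reduction. -/
inductive Hred : ∀ {n : ℕ}, Tm n → Tm n → Prop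
  | redex {n} (M : Tm (n + 1)) (N : Tm n) : Hred (.app (.lam M) N) (M.subst1 N)
  | lam {n} {M M' : Tm (n + 1)} : Hred M M' → Hred (.lam M) (.lam M')
  | app {n} {M M' N : Tm n} : Hred M M' → (∀ P, M ≠ .lam P) → Hred (.app M N) (.app M' N)

/-- `HredN j M N`: `M` head-reduces to `N` in exactly `j` steps. -/
def HredN : ∀ {n : ℕ}, ℕ → Tm n → Tm n → Prop
  | _, 0, M, N => M = N
  | _, j + 1, M, N => ∃ P, Hred M P ∧ HredN j P N

section Aux
variable {D A B : Type} {n m : ℕ}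

lemma list_sum_apply {ι M : Type*} [AddCommMonoid M] (l : List (ι → M)) (k : ι) :
    l.sum k = (l.map fun f => f k).sum := by
  induction l with
  | nil => rfl
  | cons a l ih => simp [List.sum_cons, Pi.add_apply, ih]

lemma cons_add (a b : Multiset D) (Γ Δ : Fin n → Multiset D) :
    (Fin.cons a Γ : Fin (n+1) → Multiset D) + Fin.cons b Δ
      = (Fin.cons (a + b) (Γ + Δ) : Fin (n+1) → Multiset D) := by
  funext k
  simp only [Pi.add_apply]
  refine Fin.cases ?_ ?_ k <;> simp

/-- pushforward of a context along a renaming -/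
def push (f : Fin n → Fin m) (Γ : Fin n → Multiset D) : Fin m → Multiset D :=
  fun j => ∑ k, if f k = j then Γ k else 0

lemma push_single (f : Fin n → Fin m) (k : Fin n) (α : D) :
    push f (single k α) = single (f k) α := by
  funext j
  unfold push single
  rw [Finset.sum_eq_single k]
  · simp [eq_comm]
  · intro b _ hb; simp [hb]
  · simp

def liftr (f : Fin n → Fin m) : Fin (n + 1) → Fin (m + 1) :=
  fun k => Fin.cases (motive := fun _ => Fin (m + 1)) 0 (fun j => (f j).succ) k

lemma rename_lam (f : Fin n → Fin m) (t : Tm (n + 1)) :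
    Tm.rename f (.lam t) = .lam (t.rename (liftr f)) := rfl

@[simp] lemma liftr_zero (f : Fin n → Fin m) : liftr f 0 = 0 := rfl
@[simp] lemma liftr_succ (f : Fin n → Fin m) (j : Fin n) : liftr f j.succ = (f j).succ := rfl

lemma push_liftr_cons (f : Fin n → Fin m) (a : Multiset D) (Γ : Fin n → Multiset D) :
    push (liftr f) (Fin.cons a Γ) = Fin.cons a (push f Γ) := by
  funext j
  refine Fin.cases ?_ ?_ j
  · show (∑ k, _) = a
    rw [Fin.sum_univ_succ]
    simp [Fin.succ_ne_zero]
  · intro t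
    show (∑ k, _) = push f Γ t
    rw [Fin.sum_univ_succ]
    simp [Fin.succ_inj, (Fin.succ_ne_zero t).symm, push]

lemma push_add (f : Fin n → Fin m) (Γ Δ : Fin n → Multiset D) :
    push f (Γ + Δ) = push f Γ + push f Δ := by
  funext j
  simp only [push, Pi.add_apply]
  rw [← Finset.sum_add_distrib]
  refine Finset.sum_congr rfl fun k _ => ?_
  by_cases h : f k = j <;> simp [h]

lemma push_zero (f : Fin n → Fin m) : push f (0 : Fin n → Multiset D) = 0 := by
  funext j; simp [push]

lemma push_listsum (f : Fin n → Fin m) (l : List B) (g : B → (Fin n → Multiset D)) :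
    push f ((l.map g).sum) = (l.map fun q => push f (g q)).sum := by
  induction l with
  | nil => simpa using push_zero f
  | cons a l ih => simp [push_add, ih]

end Aux
section Ren
variable {D : Type} (i : Multiset D × D → D)

lemma ren_der : ∀ {n : ℕ} {Γ : Fin n → Multiset D} {M : Tm n} {α : D} {c : ℕ},
    Der i Γ M α c → ∀ {m : ℕ} (f : Fin n → Fin m), Der i (push f Γ) (M.rename f) α c := by
  intro n Γ M α c h
  induction h with
  | var k α =>
      intro m f
      rw [push_single]
      exact Der.var (f k) α
  | lam h ih =>
      intro m f
      rw [rename_lam]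
      have := ih (liftr f)
      rw [push_liftr_cons] at this
      exact Der.lam this
  | @app n' Γ' P Q α' c' l h1 h2 ih1 ih2 =>
      intro m f
      have hfun : Der i (push f Γ') (P.rename f)
          (i (↑((l.map fun q => ((push f q.1 : Fin m → Multiset D), q.2.1, q.2.2)).map
              fun q => q.2.1), α')) c' := by
        simpa [List.map_map, Function.comp_def] using ih1 f
      have harg : ∀ q ∈ l.map fun q => ((push f q.1 : Fin m → Multiset D), q.2.1, q.2.2),
          Der i q.1 (Q.rename f) q.2.1 q.2.2 := by
        intro q hq
        simp only [List.mem_map] at hq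
        obtain ⟨p, hp, rfl⟩ := hq
        exact ih2 p hp f
      have key := Der.app _ hfun harg
      have ectx : push f (Γ' + (l.map fun q => q.1).sum)
          = push f Γ' + ((l.map fun q => ((push f q.1 : Fin m → Multiset D), q.2.1, q.2.2)).map
              fun q => q.1).sum := by
        rw [push_add, push_listsum]
        simp only [List.map_map]
        rfl
      have ecnt : c' + (l.map fun q => q.2.2).sum
          = c' + ((l.map fun q => ((push f q.1 : Fin m → Multiset D), q.2.1, q.2.2)).map
              fun q => q.2.2).sum := by
        simp only [List.map_map]
        rfl
      rw [show (Tm.app P Q).rename f = Tm.app (P.rename f) (Q.rename f) from rfl, ectx, ecnt]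
      exact key

end Ren
section Split
variable {D A B : Type} {n : ℕ}

/-- binary split of a list along a multiset decomposition of its image -/
lemma split2_s11 (f : A → D) :
    ∀ (l : List A) (s t : Multiset D), (↑(l.map f) : Multiset D) = s + t →
    ∃ l₁ l₂ : List A, (↑l₁ + ↑l₂ : Multiset A) = ↑l ∧
      (↑(l₁.map f) : Multiset D) = s ∧ (↑(l₂.map f) : Multiset D) = t := by
  intro l
  induction l with
  | nil =>
      intro s t h
      simp only [List.map_nil, Multiset.coe_nil] at h
      obtain ⟨hs, ht⟩ := add_eq_zero.mp h.symm
      exact ⟨[], [], by simp, by simp [hs], by simp [ht]⟩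
  | cons a l ih =>
      intro s t h
      have hmem : f a ∈ s + t := by
        rw [← h]; simp
      rcases Multiset.mem_add.mp hmem with hm | hm
      · obtain ⟨s', rfl⟩ := Multiset.exists_cons_of_mem hm
        have h' : (↑(l.map f) : Multiset D) = s' + t := by
          have : f a ::ₘ ↑(l.map f) = f a ::ₘ (s' + t) := by
            simpa [Multiset.cons_add] using h
          exact (Multiset.cons_inj_right _).mp this
        obtain ⟨l₁, l₂, he, h1, h2⟩ := ih s' t h'
        refine ⟨a :: l₁, l₂, ?_, ?_, h2⟩
        · simp only [← Multiset.cons_coe, Multiset.cons_add]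
          rw [he]
        · simp only [List.map_cons, ← Multiset.cons_coe]
          rw [h1]
      · obtain ⟨t', rfl⟩ := Multiset.exists_cons_of_mem hm
        have h' : (↑(l.map f) : Multiset D) = s + t' := by
          have : f a ::ₘ ↑(l.map f) = f a ::ₘ (s + t') := by
            simpa [Multiset.cons_swap, Multiset.add_cons] using h
          exact (Multiset.cons_inj_right _).mp this
        obtain ⟨l₁, l₂, he, h1, h2⟩ := ih s t' h'
        refine ⟨l₁, a :: l₂, ?_, h1, ?_⟩
        · simp only [← Multiset.cons_coe, Multiset.add_cons]
          rw [he]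
        · simp only [List.map_cons, ← Multiset.cons_coe]
          rw [h2]

/-- split a family of lists along a list of context summands -/
lemma split_family (f : A → D) :
    ∀ (l : List B) (ctx : B → (Fin n → Multiset D)) (Δ : Fin n → Multiset D)
      (L : Fin n → List A),
    (∀ k, (↑((L k).map f) : Multiset D) = Δ k + (l.map fun q => ctx q k).sum) →
    ∃ (L₀ : Fin n → List A) (G : List (B × (Fin n → List A))),
      G.map Prod.fst = l ∧
      (∀ k, (↑((L₀ k).map f) : Multiset D) = Δ k) ∧
      (∀ p ∈ G, ∀ k, (↑((p.2 k).map f) : Multiset D) = ctx p.1 k) ∧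
      (∀ k, (↑(L₀ k) + (G.map fun p => (↑(p.2 k) : Multiset A)).sum : Multiset A) = ↑(L k)) := by
  intro l
  induction l with
  | nil =>
      intro ctx Δ L h
      exact ⟨L, [], rfl, by simpa using h, by simp, by simp⟩
  | cons b l ih =>
      intro ctx Δ L h
      have h' : ∀ k, (↑((L k).map f) : Multiset D)
          = (fun k => Δ k + ctx b k) k + (l.map fun q => ctx q k).sum := by
        intro k
        rw [h k]
        simp [add_assoc]
      obtain ⟨L₀', G', hfst, hty', hG', hrem'⟩ := ih ctx (fun k => Δ k + ctx b k) L h'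
      have hsplit : ∀ k, ∃ l₁ l₂ : List A, (↑l₁ + ↑l₂ : Multiset A) = ↑(L₀' k) ∧
          (↑(l₁.map f) : Multiset D) = Δ k ∧ (↑(l₂.map f) : Multiset D) = ctx b k :=
        fun k => split2_s11 f (L₀' k) (Δ k) (ctx b k) (hty' k)
      choose l₁ l₂ he h1 h2 using hsplit
      refine ⟨l₁, (b, l₂) :: G', by simp [hfst], h1, ?_, ?_⟩
      · rintro p hp k
        rcases List.mem_cons.mp hp with rfl | hp
        · exact h2 k
        · exact hG' p hp k
      · intro k
        simp only [List.map_cons, List.sum_cons]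
        rw [← add_assoc, he k]
        exact hrem' k

lemma mem_list_sum {A : Type} {gs : List (Multiset A)} {s : Multiset A} (hs : s ∈ gs)
    {a : A} (ha : a ∈ s) : a ∈ gs.sum := by
  induction gs with
  | nil => cases hs
  | cons g gs ih =>
      rcases List.mem_cons.mp hs with rfl | hs
      · exact Multiset.mem_add.mpr (Or.inl ha)
      · exact Multiset.mem_add.mpr (Or.inr (ih hs))

lemma msum_list (g : A → B) [AddCommMonoid B] :
    ∀ (gs : List (List A)),
      (((gs.map fun x => Multiset.ofList x).sum).map g).sum
        = (gs.map fun x => (x.map g).sum).sum := by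
  intro gs
  induction gs with
  | nil => simp
  | cons x gs ih =>
      simp only [List.map_cons, List.sum_cons, Multiset.map_add, Multiset.sum_add, ih,
        Multiset.map_coe, Multiset.sum_coe]

/-- transport of list-sum decompositions along any map -/
lemma sum_split {M : Type} [AddCommMonoid M] (g : A → M) {l₀ l : List A} {gs : List (List A)}
    (h : (↑l₀ + (gs.map fun x => Multiset.ofList x).sum : Multiset A) = ↑l) :
    (l.map g).sum = (l₀.map g).sum + (gs.map fun x => (x.map g).sum).sum := by
  have := congrArg (fun s : Multiset A => (s.map g).sum) h
  simp only [Multiset.map_add, Multiset.sum_add, Multiset.map_coe, Multiset.sum_coe] at this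
  rw [← this, msum_list]

lemma sum_comm_list {M : Type} [AddCommMonoid M] (G : List B) (h : B → Fin n → M) :
    (∑ k, (G.map fun p => h p k).sum) = (G.map fun p => ∑ k, h p k).sum := by
  induction G with
  | nil => simp
  | cons p G ih => simp [Finset.sum_add_distrib, ih]

end Split
section Subst
variable {D A B : Type} {n m : ℕ}

def lifts (σ : Fin n → Tm m) : Fin (n + 1) → Tm (m + 1) :=
  fun k => Fin.cases (motive := fun _ => Tm (m + 1)) (.var 0)
    (fun j => (σ j).rename Fin.succ) k

lemma subst_lam (σ : Fin n → Tm m) (t : Tm (n + 1)) :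
    Tm.subst σ (.lam t) = .lam (t.subst (lifts σ)) := rfl

@[simp] lemma lifts_zero (σ : Fin n → Tm m) : lifts σ 0 = .var 0 := rfl
@[simp] lemma lifts_succ (σ : Fin n → Tm m) (j : Fin n) :
    lifts σ j.succ = (σ j).rename Fin.succ := rfl

lemma push_succ (Γ : Fin n → Multiset D) :
    push Fin.succ Γ = Fin.cons 0 Γ := by
  funext j
  refine Fin.cases ?_ ?_ j
  · simp [push, Fin.succ_ne_zero]
  · intro t
    simp [push, Fin.succ_inj]

lemma cons_zero_zero : (Fin.cons 0 (0 : Fin n → Multiset D) : Fin (n+1) → Multiset D) = 0 := by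
  funext j; refine Fin.cases ?_ ?_ j <;> simp

lemma list_sum_cons0 (l : List B) (g : B → (Fin n → Multiset D)) :
    (l.map fun q => (Fin.cons 0 (g q) : Fin (n+1) → Multiset D)).sum
      = Fin.cons 0 ((l.map g).sum) := by
  induction l with
  | nil => simp [cons_zero_zero]
  | cons b l ih => simp [ih, cons_add]

lemma finsum_cons0 {N : ℕ} (g : Fin N → (Fin n → Multiset D)) :
    (∑ j, (Fin.cons 0 (g j) : Fin (n+1) → Multiset D)) = Fin.cons 0 (∑ j, g j) := by
  funext k
  rw [Finset.sum_apply]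
  refine Fin.cases ?_ ?_ k
  · simp
  · intro t
    rw [Fin.cons_succ]
    simp [Finset.sum_apply]

lemma sum_singletons (s : Multiset D) :
    (s.toList.map fun β => ({β} : Multiset D)).sum = s := by
  rw [← Multiset.sum_coe, ← Multiset.map_coe, Multiset.coe_toList, Multiset.sum_map_singleton]

lemma list_sum_add (l : List B) (f g : B → ℕ) :
    (l.map fun x => f x + g x).sum = (l.map f).sum + (l.map g).sum := by
  induction l with
  | nil => rfl
  | cons b l ih => simp [ih]; omega

variable (i : Multiset D × D → D)

lemma subst_der : ∀ {n : ℕ} {Γ : Fin n → Multiset D} {M : Tm n} {α : D} {c : ℕ},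
    Der i Γ M α c →
    ∀ {m : ℕ} (σ : Fin n → Tm m) (L : Fin n → List ((Fin m → Multiset D) × D × ℕ)),
    (∀ k, (↑((L k).map fun q => q.2.1) : Multiset D) = Γ k) →
    (∀ k, ∀ q ∈ L k, Der i q.1 (σ k) q.2.1 q.2.2) →
    Der i (∑ k, ((L k).map fun q => q.1).sum) (M.subst σ) α
      (c + ∑ k, ((L k).map fun q => q.2.2).sum) := by
  intro n Γ M α c h
  induction h with
  | var k α =>
      intro m σ L hty hd
      have hne : ∀ k', k' ≠ k → L k' = [] := by
        intro k' hk'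
        have h0 := hty k'
        simp only [single, if_neg hk'] at h0
        exact List.map_eq_nil_iff.mp ((Multiset.coe_eq_zero _).mp h0)
      have hk : ∃ q, L k = [q] ∧ q.2.1 = α := by
        have h0 := hty k
        simp only [single, if_pos rfl] at h0
        rcases hLk : L k with _ | ⟨q, t⟩
        · rw [hLk] at h0; simp at h0
        · rw [hLk] at h0
          simp only [List.map_cons, ← Multiset.cons_coe] at h0
          obtain ⟨hqa, hrest⟩ := (Multiset.singleton_eq_cons_iff _).mp h0.symm
          have ht : t = [] := List.map_eq_nil_iff.mp ((Multiset.coe_eq_zero _).mp hrest)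
          exact ⟨q, by simp [hLk, ht], hqa.symm⟩
      obtain ⟨q, hLk, hq⟩ := hk
      have ectx : (∑ k', ((L k').map fun q => q.1).sum) = q.1 := by
        rw [Finset.sum_eq_single k]
        · rw [hLk]; simp
        · intro b _ hb; rw [hne b hb]; simp
        · simp
      have ecnt : (∑ k', ((L k').map fun q => q.2.2).sum) = q.2.2 := by
        rw [Finset.sum_eq_single k]
        · rw [hLk]; simp
        · intro b _ hb; rw [hne b hb]; simp
        · simp
      rw [ectx, ecnt, zero_add]
      have := hd k q (by rw [hLk]; simp)
      rwa [hq] at this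
  | @lam n' Γ' a P α' c' h ih =>
      intro m σ L hty hd
      set L' : Fin (n' + 1) → List ((Fin (m + 1) → Multiset D) × D × ℕ) :=
        Fin.cases (a.toList.map fun β => (single 0 β, β, 0))
          (fun j => (L j).map fun q => (push Fin.succ q.1, q.2.1, q.2.2)) with hL'
      have hty' : ∀ k, (↑((L' k).map fun q => q.2.1) : Multiset D) = (Fin.cons a Γ' : Fin (n'+1) → Multiset D) k := by
        refine Fin.cases ?_ ?_
        · simp [hL', List.map_map, Function.comp_def, Multiset.coe_toList]
        · intro j
          simp only [hL', Fin.cases_succ, List.map_map]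
          rw [Fin.cons_succ, ← hty j]
          rfl
      have hd' : ∀ k, ∀ q ∈ L' k, Der i q.1 (lifts σ k) q.2.1 q.2.2 := by
        refine Fin.cases ?_ ?_
        · intro q hq
          simp only [hL', Fin.cases_zero, List.mem_map] at hq
          obtain ⟨β, _, rfl⟩ := hq
          exact Der.var 0 β
        · intro j q hq
          simp only [hL', Fin.cases_succ, List.mem_map] at hq
          obtain ⟨p, hp, rfl⟩ := hq
          exact ren_der i (hd j p hp) Fin.succ
      have key := ih (lifts σ) L' hty' hd'
      rw [subst_lam]
      have ectx : (∑ k, ((L' k).map fun q => q.1).sum)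
          = Fin.cons a (∑ k, ((L k).map fun q => q.1).sum) := by
        rw [Fin.sum_univ_succ]
        have e0 : ((L' 0).map fun q => q.1).sum = (Fin.cons a 0 : Fin (m+1) → Multiset D) := by
          simp only [hL', Fin.cases_zero, List.map_map]
          funext j
          rw [list_sum_apply, List.map_map]
          refine Fin.cases ?_ ?_ j
          · show (a.toList.map fun β => single (0 : Fin (m+1)) β 0).sum = a
            simp only [single, if_pos rfl]
            exact sum_singletons a
          · intro t
            rw [Fin.cons_succ]
            show (a.toList.map fun β => single (0 : Fin (m+1)) β t.succ).sum
              = (0 : Fin m → Multiset D) t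
            simp [single, (Fin.succ_ne_zero t)]
        have es : ∀ j : Fin n', ((L' j.succ).map fun q => q.1).sum
            = Fin.cons 0 (((L j).map fun q => q.1).sum) := by
          intro j
          simp only [hL', Fin.cases_succ, List.map_map]
          have : ((L j).map fun q => push Fin.succ q.1).sum
              = Fin.cons 0 (((L j).map fun q => q.1).sum) := by
            simp only [push_succ]
            exact list_sum_cons0 (L j) _
          rw [← this]
          rfl
        rw [e0]
        simp only [es]
        rw [finsum_cons0, cons_add]
        simp
      have ecnt : (∑ k, ((L' k).map fun q => q.2.2).sum)
          = ∑ k, ((L k).map fun q => q.2.2).sum := by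
        rw [Fin.sum_univ_succ]
        have e0 : ((L' 0).map fun q => q.2.2).sum = 0 := by
          simp [hL', List.map_map, Function.comp_def]
        have es : ∀ j : Fin n', ((L' j.succ).map fun q => q.2.2).sum
            = ((L j).map fun q => q.2.2).sum := by
          intro j
          simp only [hL', Fin.cases_succ, List.map_map]
          rfl
        rw [e0, zero_add]
        simp only [es]
      rw [ectx, ecnt] at key
      exact Der.lam key
  | @app n' Γ' P Q α' c' l h1 h2 ih1 ih2 =>
      intro m σ L hty hd
      have hty' : ∀ k, (↑((L k).map fun q => q.2.1) : Multiset D)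
          = Γ' k + (l.map fun q => q.1 k).sum := by
        intro k
        rw [hty k, Pi.add_apply, list_sum_apply, List.map_map]
        rfl
      obtain ⟨L₀, G, hfst, hty0, hG, hrem⟩ :=
        split_family (fun q : (Fin m → Multiset D) × D × ℕ => q.2.1) l (fun q => q.1) Γ' L hty'
      have hmem0 : ∀ k q, q ∈ L₀ k → q ∈ L k := by
        intro k q hq
        rw [← Multiset.mem_coe, ← hrem k]
        exact Multiset.mem_add.mpr (Or.inl (Multiset.mem_coe.mpr hq))
      have hmemG : ∀ p ∈ G, ∀ k q, q ∈ p.2 k → q ∈ L k := by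
        intro p hp k q hq
        rw [← Multiset.mem_coe, ← hrem k]
        refine Multiset.mem_add.mpr (Or.inr ?_)
        exact mem_list_sum (List.mem_map_of_mem hp) (Multiset.mem_coe.mpr hq)
      set l'' : List ((Fin m → Multiset D) × D × ℕ) := G.map fun p =>
        ((∑ k, ((p.2 k).map fun q => q.1).sum), p.1.2.1,
          p.1.2.2 + ∑ k, ((p.2 k).map fun q => q.2.2).sum) with hl''
      have etys : (l''.map fun q => q.2.1) = l.map fun q => q.2.1 := by
        rw [hl'', List.map_map, ← hfst, List.map_map]
        rfl
      have hfun : Der i (∑ k, ((L₀ k).map fun q => q.1).sum) (P.subst σ)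
          (i (↑(l''.map fun q => q.2.1), α')) (c' + ∑ k, ((L₀ k).map fun q => q.2.2).sum) := by
        rw [etys]
        exact ih1 σ L₀ hty0 (fun k q hq => hd k q (hmem0 k q hq))
      have harg : ∀ q'' ∈ l'', Der i q''.1 (Q.subst σ) q''.2.1 q''.2.2 := by
        intro q'' hq''
        rw [hl''] at hq''
        obtain ⟨p, hp, rfl⟩ := List.mem_map.mp hq''
        have hpl : p.1 ∈ l := by rw [← hfst]; exact List.mem_map_of_mem hp
        exact ih2 p.1 hpl σ p.2 (hG p hp) (fun k q hq => hd k q (hmemG p hp k q hq))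
      have key := Der.app l'' hfun harg
      have hctx : ∑ k, ((L k).map fun q => q.1).sum
          = (∑ k, ((L₀ k).map fun q => q.1).sum) + (l''.map fun q => q.1).sum := by
        have e1 : ∀ k, ((L k).map fun q => q.1).sum
            = ((L₀ k).map fun q => q.1).sum
              + (G.map fun p => ((p.2 k).map fun q => q.1).sum).sum := by
          intro k
          have h2' := sum_split (A := (Fin m → Multiset D) × D × ℕ)
            (g := fun q => q.1) (gs := G.map fun p => p.2 k) (by rw [List.map_map]; exact hrem k)
          rw [List.map_map] at h2'
          exact h2'
        rw [Finset.sum_congr rfl fun k _ => e1 k, Finset.sum_add_distrib]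
        congr 1
        rw [sum_comm_list G (fun p k => ((p.2 k).map fun q => q.1).sum), hl'', List.map_map]
        rfl
      have hcnt : ∑ k, ((L k).map fun q => q.2.2).sum
          = (∑ k, ((L₀ k).map fun q => q.2.2).sum)
            + (G.map fun p => ∑ k, ((p.2 k).map fun q => q.2.2).sum).sum := by
        have e1 : ∀ k, ((L k).map fun q => q.2.2).sum
            = ((L₀ k).map fun q => q.2.2).sum
              + (G.map fun p => ((p.2 k).map fun q => q.2.2).sum).sum := by
          intro k
          have h2' := sum_split (A := (Fin m → Multiset D) × D × ℕ)
            (g := fun q => q.2.2) (gs := G.map fun p => p.2 k) (by rw [List.map_map]; exact hrem k)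
          rw [List.map_map] at h2'
          exact h2'
        rw [Finset.sum_congr rfl fun k _ => e1 k, Finset.sum_add_distrib]
        congr 1
        exact sum_comm_list G (fun p k => ((p.2 k).map fun q => q.2.2).sum)
      have hl2 : (l''.map fun q => q.2.2).sum
          = (l.map fun q => q.2.2).sum
            + (G.map fun p => ∑ k, ((p.2 k).map fun q => q.2.2).sum).sum := by
        have e0 : (l''.map fun q => q.2.2)
            = G.map fun p => p.1.2.2 + ∑ k, ((p.2 k).map fun q => q.2.2).sum := by
          rw [hl'', List.map_map]
          rfl
        rw [e0, list_sum_add]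
        congr 2
        rw [← hfst, List.map_map]
        rfl
      have ecnt : c' + (l.map fun q => q.2.2).sum + 1 + ∑ k, ((L k).map fun q => q.2.2).sum
          = (c' + ∑ k, ((L₀ k).map fun q => q.2.2).sum) + (l''.map fun q => q.2.2).sum + 1 := by
        omega
      show Der i (∑ k, ((L k).map fun q => q.1).sum) (Tm.app (P.subst σ) (Q.subst σ)) α'
        (c' + (l.map fun q => q.2.2).sum + 1 + ∑ k, ((L k).map fun q => q.2.2).sum)
      rw [hctx, ecnt]
      exact key

end Subst
section SR
variable {D : Type} (i : Multiset D × D → D)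

lemma lam_inv {n : ℕ} {Γ : Fin n → Multiset D} {P : Tm (n + 1)} {β : D} {c : ℕ}
    (h : Der i Γ (.lam P) β c) :
    ∃ a α₀, β = i (a, α₀) ∧ Der i (Fin.cons a Γ) P α₀ c := by
  cases h with
  | lam h => exact ⟨_, _, rfl, h⟩

lemma app_inv {n : ℕ} {Γt : Fin n → Multiset D} {P Q : Tm n} {α : D} {c : ℕ}
    (h : Der i Γt (.app P Q) α c) :
    ∃ (Γ₀ : Fin n → Multiset D) (l : List ((Fin n → Multiset D) × D × ℕ)) (c₀ : ℕ),
      Γt = Γ₀ + (l.map fun q => q.1).sum ∧ c = c₀ + (l.map fun q => q.2.2).sum + 1 ∧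
      Der i Γ₀ P (i (↑(l.map fun q => q.2.1), α)) c₀ ∧
      ∀ q ∈ l, Der i q.1 Q q.2.1 q.2.2 := by
  cases h with
  | app l h1 h2 => exact ⟨_, l, _, rfl, rfl, h1, h2⟩

lemma subst1_der {n : ℕ} {Γ₀ : Fin n → Multiset D} {P : Tm (n + 1)} {Q : Tm n} {α : D} {c₀ : ℕ}
    (l : List ((Fin n → Multiset D) × D × ℕ))
    (hP : Der i (Fin.cons (↑(l.map fun q => q.2.1)) Γ₀) P α c₀)
    (hQ : ∀ q ∈ l, Der i q.1 Q q.2.1 q.2.2) :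
    Der i (Γ₀ + (l.map fun q => q.1).sum) (P.subst1 Q) α
      (c₀ + (l.map fun q => q.2.2).sum) := by
  set σ : Fin (n + 1) → Tm n := Fin.cases (motive := fun _ => Tm n) Q Tm.var with hσ
  set L : Fin (n + 1) → List ((Fin n → Multiset D) × D × ℕ) :=
    Fin.cases l (fun j => (Γ₀ j).toList.map fun β => (single j β, β, 0)) with hL
  have hty : ∀ k, (↑((L k).map fun q => q.2.1) : Multiset D)
      = (Fin.cons (↑(l.map fun q => q.2.1)) Γ₀ : Fin (n+1) → Multiset D) k := by
    refine Fin.cases ?_ ?_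
    · simp [hL]
    · intro j
      simp [hL, List.map_map, Function.comp_def, Multiset.coe_toList]
  have hd : ∀ k, ∀ q ∈ L k, Der i q.1 (σ k) q.2.1 q.2.2 := by
    refine Fin.cases ?_ ?_
    · intro q hq
      simp only [hL, Fin.cases_zero] at hq
      exact hQ q hq
    · intro j q hq
      simp only [hL, Fin.cases_succ, List.mem_map] at hq
      obtain ⟨β, _, rfl⟩ := hq
      exact Der.var j β
  have key := subst_der i hP σ L hty hd
  have eΓ : (∑ j : Fin n, ((Γ₀ j).toList.map fun β => (single j β : Fin n → Multiset D)).sum)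
      = Γ₀ := by
    funext t
    rw [Finset.sum_apply]
    rw [Finset.sum_eq_single t]
    · rw [list_sum_apply, List.map_map]
      have : ((fun f : Fin n → Multiset D => f t) ∘ fun β => (single t β : Fin n → Multiset D))
          = fun β => ({β} : Multiset D) := by
        funext β; simp [single]
      rw [this]
      exact sum_singletons _
    · intro b _ hb
      rw [list_sum_apply, List.map_map]
      have : ((fun f : Fin n → Multiset D => f t) ∘ fun β => (single b β : Fin n → Multiset D))
          = fun β => (0 : Multiset D) := by
        funext β; simp [single, hb.symm]
      rw [this]
      simp
    · simp
  have ectx : (∑ k, ((L k).map fun q => q.1).sum)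
      = Γ₀ + (l.map fun q => q.1).sum := by
    rw [Fin.sum_univ_succ]
    have e0 : ((L 0).map fun q => q.1).sum = (l.map fun q => q.1).sum := by simp [hL]
    have es : ∀ j : Fin n, ((L j.succ).map fun q => q.1).sum
        = ((Γ₀ j).toList.map fun β => (single j β : Fin n → Multiset D)).sum := by
      intro j
      simp only [hL, Fin.cases_succ, List.map_map]
      rfl
    rw [e0]
    simp only [es]
    rw [eΓ, add_comm]
  have ecnt : (∑ k, ((L k).map fun q => q.2.2).sum) = (l.map fun q => q.2.2).sum := by
    rw [Fin.sum_univ_succ]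
    have e0 : ((L 0).map fun q => q.2.2).sum = (l.map fun q => q.2.2).sum := by simp [hL]
    have es : ∀ j : Fin n, ((L j.succ).map fun q => q.2.2).sum = 0 := by
      intro j
      simp [hL, List.map_map, Function.comp_def]
    rw [e0]
    simp only [es]
    simp
  rw [ectx, ecnt] at key
  exact key

lemma sr (hi : Function.Injective i) :
    ∀ {n : ℕ} {M M' : Tm n}, Hred M M' →
    ∀ {Γ : Fin n → Multiset D} {α : D} {c : ℕ}, Der i Γ M α c →
    ∃ c' < c, Der i Γ M' α c' := by
  intro n M M' hred
  induction hred with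
  | redex P Q =>
      intro Γ α c h
      obtain ⟨Γ₀, l, c₀, rfl, rfl, h1, h2⟩ := app_inv i h
      obtain ⟨a, α₀, hβ, hP⟩ := lam_inv i h1
      have hpair := hi hβ
      have ha : (↑(l.map fun q => q.2.1) : Multiset D) = a := congrArg Prod.fst hpair
      have hα : α = α₀ := congrArg Prod.snd hpair
      rw [← ha, ← hα] at hP
      exact ⟨c₀ + (l.map fun q => q.2.2).sum, by omega, subst1_der i l hP h2⟩
  | lam hr ih =>
      intro Γ β c h
      obtain ⟨a, α₀, rfl, hP⟩ := lam_inv i h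
      obtain ⟨c', hc', hP'⟩ := ih hP
      exact ⟨c', hc', Der.lam hP'⟩
  | app hr hnl ih =>
      intro Γ α c h
      obtain ⟨Γ₀, l, c₀, rfl, rfl, h1, h2⟩ := app_inv i h
      obtain ⟨c₀', hc', h1'⟩ := ih h1
      exact ⟨c₀' + (l.map fun q => q.2.2).sum + 1, by omega, Der.app l h1' h2⟩

lemma main_lemma (hi : Function.Injective i) :
    ∀ (k : ℕ) {n : ℕ} {Γ : Fin n → Multiset D} {M : Tm n} {α : D},
      Der i Γ M α k →
      ∃ j ≤ k, ∃ M' : Tm n, HredN j M M' ∧ ∀ M'', ¬ Hred M' M'' := by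
  intro k
  induction k using Nat.strong_induction_on with
  | _ k ih =>
    intro n Γ M α h
    by_cases hnf : ∀ M'', ¬ Hred M M''
    · exact ⟨0, Nat.zero_le k, M, rfl, hnf⟩
    · push_neg at hnf
      obtain ⟨P, hP⟩ := hnf
      obtain ⟨c', hc', hP'⟩ := sr i hi hP h
      obtain ⟨j, hj, M', hM', hnf'⟩ := ih c' hc' hP'
      exact ⟨j + 1, by omega, M', ⟨P, hP, hM'⟩, hnf'⟩

end SR

/-- If a λ⊥-term has a typing derivation with `#app(π) = k` in the type system of a
relational graph model, then its head reduction terminates (in a head normal form)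
after at most `k` steps. -/
theorem stmt_11 {D : Type} [Infinite D] (i : Multiset D × D → D)
    (hi : Function.Injective i) {n : ℕ} {Γ : Fin n → Multiset D} {M : Tm n}
    {α : D} {k : ℕ} (h : Der i Γ M α k) :
    ∃ j ≤ k, ∃ M' : Tm n, HredN j M M' ∧ ∀ M'', ¬ Hred M' M'' :=
  main_lemma i hi k h
end

section
/- Typability of direct approximants: if a λ⊥-term M is in β-normal form and Γ ⊢_D M : α is derivable, then Γ ⊢_D ω(M) : α is derivable, where ω(M) is the direct approximant of M. -/
/-- The direct approximant `ω(M)` of a λ⊥-term. -/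
def Da : ∀ {n : ℕ}, Tm n → Tm n
  | _, .var k => .var k
  | _, .bot => .bot
  | _, .lam M =>
      match Da M with
      | .bot => .bot
      | M' => .lam M'
  | _, .app M N =>
      match Da M with
      | .bot => .bot
      | .lam _ => .bot
      | M' => .app M' (Da N)

lemma bot_not_der {D : Type} {i : Multiset D × D → D} {n : ℕ}
    {Γ : Fin n → Multiset D} {α : D} {m : ℕ} : ¬ Der i Γ (Tm.bot) α m := by
  intro h; cases h

lemma da_lam {n : ℕ} {M : Tm (n+1)} (h : Da M ≠ Tm.bot) :
    Da (Tm.lam M) = Tm.lam (Da M) := by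
  have e : Da (Tm.lam M) =
      (match Da M with
        | Tm.bot => Tm.bot
        | M' => Tm.lam M') := rfl
  rw [e]
  cases hM : Da M <;> simp_all

lemma da_app {n : ℕ} {M N : Tm n} (h : Da M ≠ Tm.bot)
    (h2 : ∀ K : Tm (n+1), Da M ≠ Tm.lam K) :
    Da (Tm.app M N) = Tm.app (Da M) (Da N) := by
  have e : Da (Tm.app M N) =
      (match Da M with
        | Tm.bot => Tm.bot
        | .lam _ => Tm.bot
        | M' => Tm.app M' (Da N)) := rfl
  rw [e]
  cases hM : Da M <;> simp_all

lemma da_lam_shape {n : ℕ} {M : Tm n} {K : Tm (n+1)} (h : Da M = Tm.lam K) :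
    ∃ K', M = Tm.lam K' := by
  cases M with
  | var k => simp [Da] at h
  | bot => simp [Da] at h
  | lam M' => exact ⟨M', rfl⟩
  | app M' N' =>
    exfalso
    have e : Da (Tm.app M' N') =
        (match Da M' with
          | Tm.bot => Tm.bot
          | .lam _ => Tm.bot
          | X => Tm.app X (Da N')) := rfl
    rw [e] at h
    cases hM : Da M' <;> simp_all

lemma list_choice {D : Type} {i : Multiset D × D → D} {n : ℕ} {N : Tm n} :
    ∀ (l : List ((Fin n → Multiset D) × D × ℕ)),
      (∀ q ∈ l, ∃ m', Der i q.1 (Da N) q.2.1 m') →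
      ∃ l' : List ((Fin n → Multiset D) × D × ℕ),
        (l'.map fun q => q.1) = (l.map fun q => q.1) ∧
        (l'.map fun q => q.2.1) = (l.map fun q => q.2.1) ∧
        ∀ q ∈ l', Der i q.1 (Da N) q.2.1 q.2.2 := by
  intro l
  induction l with
  | nil => exact fun _ => ⟨[], rfl, rfl, by simp⟩
  | cons a t ih =>
    intro h
    obtain ⟨m', hm'⟩ := h a (by simp)
    obtain ⟨l', h1, h2, h3⟩ := ih (fun q hq => h q (by simp [hq]))
    refine ⟨(a.1, a.2.1, m') :: l', by simp [h1], by simp [h2], ?_⟩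
    intro q hq
    rcases List.mem_cons.mp hq with rfl | hq
    · exact hm'
    · exact h3 _ hq

/-- Typability of direct approximants: if `M` is a β-normal λ⊥-term and `Γ ⊢ M : α` is
derivable in the type system of a relational graph model, then so is `Γ ⊢ ω(M) : α`. -/
theorem stmt_12 {D : Type} [Infinite D] (i : Multiset D × D → D)
    (hi : Function.Injective i) {n : ℕ} {Γ : Fin n → Multiset D} {M : Tm n}
    {α : D} {m : ℕ} (hnf : ∀ N, ¬ Beta M N) (h : Der i Γ M α m) :
    ∃ m' : ℕ, Der i Γ (Da M) α m' := by
  induction h with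
  | var k α => exact ⟨0, Der.var k α⟩
  | @lam n Γ a M₀ α m h ih =>
    obtain ⟨m', hm'⟩ := ih (fun N hN => hnf _ (Beta.lam hN))
    have hne : Da M₀ ≠ Tm.bot := fun he => bot_not_der (he ▸ hm')
    rw [da_lam hne]
    exact ⟨m', Der.lam hm'⟩
  | @app n Γ M₀ N₀ α m l hM hN ihM ihN =>
    obtain ⟨m', hm'⟩ := ihM (fun K hK => hnf _ (Beta.appL hK))
    have hne : Da M₀ ≠ Tm.bot := fun he => bot_not_der (he ▸ hm')
    have hnl : ∀ K : Tm (n+1), Da M₀ ≠ Tm.lam K := by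
      intro K hK
      obtain ⟨K', rfl⟩ := da_lam_shape hK
      exact hnf _ (Beta.redex K' N₀)
    rw [da_app hne hnl]
    obtain ⟨l', h1, h2, h3⟩ := list_choice l
      (fun q hq => ihN q hq (fun K hK => hnf _ (Beta.appR hK)))
    refine ⟨m' + (l'.map fun q => q.2.2).sum + 1, ?_⟩
    have := Der.app (i := i) l' (h2 ▸ hm') h3
    rwa [h1] at this
end
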